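/- arXiv:2203.13514 — 9 statements merged into one kernel-verified Lean document; each statement's English description precedes it below -/
import Mathlib

section
/- Let E be a real inner product space of dimension 2, let x₀ ∈ E, and let f : E → ℝ be strongly differentiable at x₀ with gradient g. For points a, b, c ∈ E that are not collinear, let ā be the reflection of a across the affine span of {b, c}, and set r̄(a,b,c) = ((f(ā) − f(a))/‖ā − a‖²) • (ā − a) + ((f(c) − f(b))/‖c − b‖²) • (c − b). Then for every ε > 0 there exists δ > 0 such that whenever a, b, c ∈ E are not collinear and ‖a − x₀‖ < δ, ‖b − x₀‖ < δ, ‖c − x₀‖ < δ, one has ‖r̄(a,b,c) − g‖ < ε; in other words, r̄(a,b,c) tends to g as the non-degenerate triangle with vertices a, b, c contracts to x₀. -/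
open EuclideanGeometry
open scoped InnerProductSpace

/-- Orthogonal reflection of the point `p` across the affine span of the set `s`
(Mathlib's `EuclideanGeometry.reflection`), extended by the identity if `s` is empty. -/
noncomputable def mirror {E : Type*} [NormedAddCommGroup E] [InnerProductSpace ℝ E]
    [FiniteDimensional ℝ E] (s : Set E) (p : E) : E :=
  open scoped Classical in
  if hs : s.Nonempty then
    haveI : Nonempty (affineSpan ℝ s) := ((affineSpan_nonempty ℝ (s := s)).mpr hs).to_subtype
    EuclideanGeometry.reflection (affineSpan ℝ s) p
  else p

theorem norm_le_of_span_pair {E : Type*} [NormedAddCommGroup E] [InnerProductSpace ℝ E]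
    {u v : E} (hu : u ≠ 0) (hv : v ≠ 0) (huv : ⟪u, v⟫_ℝ = 0)
    (hspan : Submodule.span ℝ ({u, v} : Set E) = ⊤) (w : E) :
    ‖w‖ ≤ |⟪u, w⟫_ℝ| / ‖u‖ + |⟪v, w⟫_ℝ| / ‖v‖ := by
  have hu2 : ⟪u, u⟫_ℝ ≠ 0 := by simpa [inner_self_eq_zero] using hu
  have hv2 : ⟪v, v⟫_ℝ ≠ 0 := by simpa [inner_self_eq_zero] using hv
  have hvu : ⟪v, u⟫_ℝ = 0 := by rwa [real_inner_comm]
  set w' : E := w - (⟪u, w⟫_ℝ / ⟪u, u⟫_ℝ) • u - (⟪v, w⟫_ℝ / ⟪v, v⟫_ℝ) • v with hw'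
  have h1 : ⟪u, w'⟫_ℝ = 0 := by
    simp only [hw', inner_sub_right, real_inner_smul_right, huv]
    field_simp
    ring
  have h2 : ⟪v, w'⟫_ℝ = 0 := by
    simp only [hw', inner_sub_right, real_inner_smul_right, hvu]
    field_simp
    ring
  have hz : ∀ z ∈ Submodule.span ℝ ({u, v} : Set E), ⟪z, w'⟫_ℝ = 0 := by
    intro z hz
    induction hz using Submodule.span_induction with
    | mem z hz => rcases hz with rfl | rfl <;> assumption
    | zero => simp
    | add x y _ _ hx hy => simp [inner_add_left, hx, hy]
    | smul t x _ hx => simp [real_inner_smul_left, hx]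
  have hw'0 : w' = 0 := by
    have := hz w' (hspan ▸ Submodule.mem_top)
    rwa [inner_self_eq_zero] at this
  have hwe : w = (⟪u, w⟫_ℝ / ⟪u, u⟫_ℝ) • u + (⟪v, w⟫_ℝ / ⟪v, v⟫_ℝ) • v := by
    have h := sub_eq_zero.mp (by rw [← hw'0, hw']; abel :
      w - ((⟪u, w⟫_ℝ / ⟪u, u⟫_ℝ) • u + (⟪v, w⟫_ℝ / ⟪v, v⟫_ℝ) • v) = 0)
    exact h
  calc ‖w‖ ≤ ‖(⟪u, w⟫_ℝ / ⟪u, u⟫_ℝ) • u‖ + ‖(⟪v, w⟫_ℝ / ⟪v, v⟫_ℝ) • v‖ := by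
        conv_lhs => rw [hwe]
        exact norm_add_le _ _
    _ = |⟪u, w⟫_ℝ| / ‖u‖ + |⟪v, w⟫_ℝ| / ‖v‖ := by
        rw [norm_smul, norm_smul, Real.norm_eq_abs, Real.norm_eq_abs, abs_div, abs_div,
          real_inner_self_eq_norm_sq, real_inner_self_eq_norm_sq,
          abs_of_nonneg (by positivity : (0:ℝ) ≤ ‖u‖^2), abs_of_nonneg (by positivity : (0:ℝ) ≤ ‖v‖^2)]
        have hun : ‖u‖ ≠ 0 := norm_ne_zero_iff.mpr hu
        have hvn : ‖v‖ ≠ 0 := norm_ne_zero_iff.mpr hv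
        field_simp


/-- If `f : E → ℝ` (with `dim E = 2`) is strongly differentiable at `x₀` with gradient `g`,
then the mean multi-difference quotient
`r̄(a,b,c) = ((f ā − f a)/‖ā − a‖²) • (ā − a) + ((f c − f b)/‖c − b‖²) • (c − b)`,
where `ā` is the reflection of `a` across the affine span of `{b, c}`,
converges to `g` as the non-degenerate triangle with vertices `a`, `b`, `c`
contracts to `x₀`. -/
theorem mean_secant_plane_tendsto_gradient_dim2
    {E : Type*} [NormedAddCommGroup E] [InnerProductSpace ℝ E] [FiniteDimensional ℝ E]
    (hdim : Module.finrank ℝ E = 2) (x₀ : E) (f : E → ℝ) (g : E)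
    (hf : ∀ ε > (0 : ℝ), ∃ δ > (0 : ℝ), ∀ u v : E,
      ‖u - x₀‖ < δ → ‖v - x₀‖ < δ → |f u - f v - ⟪g, u - v⟫_ℝ| ≤ ε * ‖u - v‖) :
    ∀ ε > (0 : ℝ), ∃ δ > (0 : ℝ), ∀ a b c : E,
      ¬ Collinear ℝ ({a, b, c} : Set E) →
      ‖a - x₀‖ < δ → ‖b - x₀‖ < δ → ‖c - x₀‖ < δ →
      ‖(((f (mirror {b, c} a) - f a) / ‖mirror {b, c} a - a‖ ^ 2) • (mirror {b, c} a - a) +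
          ((f c - f b) / ‖c - b‖ ^ 2) • (c - b)) - g‖ < ε := by
  intro ε hε
  obtain ⟨δ', hδ', h⟩ := hf (ε / 3) (by positivity)
  refine ⟨δ' / 3, by positivity, ?_⟩
  intro a b c hcol ha hb hc
  have hsne : ({b, c} : Set E).Nonempty := ⟨b, by simp⟩
  haveI : Nonempty (affineSpan ℝ ({b, c} : Set E)) :=
    ((affineSpan_nonempty ℝ (s := ({b, c} : Set E))).mpr hsne).to_subtype
  have hm : mirror ({b, c} : Set E) a = reflection (affineSpan ℝ ({b, c} : Set E)) a :=
    dif_pos hsne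
  set sp := affineSpan ℝ ({b, c} : Set E) with hsp
  rw [hm]
  set A := reflection sp a with hA
  have hbmem : b ∈ sp := subset_affineSpan ℝ _ (by simp)
  have hcmem : c ∈ sp := subset_affineSpan ℝ _ (by simp)
  have hanot : a ∉ sp := fun hmem => hcol (collinear_insert_of_mem_affineSpan_pair hmem)
  have hAa : A ≠ a := fun hEq => hanot ((EuclideanGeometry.reflection_eq_self_iff a).mp hEq)
  set u := A - a with hu
  set v := c - b with hv
  have hu0 : u ≠ 0 := sub_ne_zero.mpr hAa
  have hv0 : v ≠ 0 := by
    rw [hv, sub_ne_zero]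
    intro hEq
    apply hcol
    rw [← hEq]
    simpa using collinear_pair ℝ a c
  have humem : u ∈ sp.directionᗮ := by
    have hmem := orthogonalProjection_vsub_mem_direction_orthogonal sp a
    have h2 : u = (2 : ℝ) • ((EuclideanGeometry.orthogonalProjection sp a : E) -ᵥ a) := by
      rw [hu, hA, EuclideanGeometry.reflection_apply']
      simp only [vsub_eq_sub, vadd_eq_add, smul_sub, two_smul]
      abel
    rw [h2]
    exact Submodule.smul_mem _ _ hmem
  have hvmem : v ∈ sp.direction := by
    have := AffineSubspace.vsub_mem_direction hcmem hbmem
    simpa [hv] using this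
  have huv : ⟪u, v⟫_ℝ = 0 := by
    have := (Submodule.mem_orthogonal _ _).mp humem v hvmem
    rwa [real_inner_comm]
  have hvu : ⟪v, u⟫_ℝ = 0 := by rwa [real_inner_comm]
  have hu2 : ⟪u, u⟫_ℝ ≠ 0 := by simpa [inner_self_eq_zero] using hu0
  have hv2 : ⟪v, v⟫_ℝ ≠ 0 := by simpa [inner_self_eq_zero] using hv0
  have hli : LinearIndependent ℝ ![u, v] := by
    rw [LinearIndependent.pair_iff]
    intro s t hst
    have h1 : ⟪u, s • u + t • v⟫_ℝ = 0 := by rw [hst]; simp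
    have h2 : ⟪v, s • u + t • v⟫_ℝ = 0 := by rw [hst]; simp
    rw [inner_add_right, real_inner_smul_right, real_inner_smul_right, huv] at h1
    rw [inner_add_right, real_inner_smul_right, real_inner_smul_right, hvu] at h2
    have hs : s = 0 := by
      have hs0 : s * ⟪u, u⟫_ℝ = 0 := by linarith
      rcases mul_eq_zero.mp hs0 with h' | h'
      · exact h'
      · exact absurd h' hu2
    refine ⟨hs, ?_⟩
    subst hs
    have ht0 : t * ⟪v, v⟫_ℝ = 0 := by linarith
    rcases mul_eq_zero.mp ht0 with h' | h'
    · exact h'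
    · exact absurd h' hv2
  have hspan : Submodule.span ℝ ({u, v} : Set E) = ⊤ := by
    have hr : Set.range ![u, v] = ({u, v} : Set E) := by
      simp [Matrix.range_cons, Matrix.range_empty, Set.pair_comm v u]
    apply Submodule.eq_top_of_finrank_eq
    rw [← hr, finrank_span_eq_card hli, hdim]
    simp
  have hAx : ‖A - x₀‖ < δ' := by
    have h1 : ‖A - b‖ = ‖a - b‖ := by
      have := dist_reflection_eq_of_mem sp hbmem a
      rw [dist_eq_norm, dist_eq_norm] at this
      rw [norm_sub_rev A b, norm_sub_rev a b]
      exact this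
    have h2 : ‖A - x₀‖ ≤ ‖A - b‖ + ‖b - x₀‖ := norm_sub_le_norm_sub_add_norm_sub A b x₀
    have h3 : ‖a - b‖ ≤ ‖a - x₀‖ + ‖x₀ - b‖ := norm_sub_le_norm_sub_add_norm_sub a x₀ b
    rw [norm_sub_rev x₀ b] at h3
    linarith
  have hax' : ‖a - x₀‖ < δ' := by linarith
  have hbx' : ‖b - x₀‖ < δ' := by linarith
  have hcx' : ‖c - x₀‖ < δ' := by linarith
  set w := ((f A - f a) / ‖u‖ ^ 2) • u + ((f c - f b) / ‖v‖ ^ 2) • v - g with hw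
  have hun : (0:ℝ) < ‖u‖ := norm_pos_iff.mpr hu0
  have hvn : (0:ℝ) < ‖v‖ := norm_pos_iff.mpr hv0
  have hcomp1 : ⟪u, w⟫_ℝ = f A - f a - ⟪g, u⟫_ℝ := by
    rw [hw, inner_sub_right, inner_add_right, real_inner_smul_right, real_inner_smul_right,
      huv, real_inner_self_eq_norm_sq, real_inner_comm u g]
    field_simp
    ring
  have hcomp2 : ⟪v, w⟫_ℝ = f c - f b - ⟪g, v⟫_ℝ := by
    rw [hw, inner_sub_right, inner_add_right, real_inner_smul_right, real_inner_smul_right,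
      hvu, real_inner_self_eq_norm_sq, real_inner_comm v g]
    field_simp
    ring
  have hb1 : |⟪u, w⟫_ℝ| ≤ ε / 3 * ‖u‖ := by
    rw [hcomp1, hu]
    exact h A a hAx hax'
  have hb2 : |⟪v, w⟫_ℝ| ≤ ε / 3 * ‖v‖ := by
    rw [hcomp2, hv]
    exact h c b hcx' hbx'
  have key := norm_le_of_span_pair hu0 hv0 huv hspan w
  have e1 : |⟪u, w⟫_ℝ| / ‖u‖ ≤ ε / 3 := by rw [div_le_iff₀ hun]; exact hb1
  have e2 : |⟪v, w⟫_ℝ| / ‖v‖ ≤ ε / 3 := by rw [div_le_iff₀ hvn]; exact hb2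
  calc ‖w‖ ≤ |⟪u, w⟫_ℝ| / ‖u‖ + |⟪v, w⟫_ℝ| / ‖v‖ := key
    _ ≤ ε / 3 + ε / 3 := add_le_add e1 e2
    _ < ε := by linarith
end

section
/- Let E be a real inner product space of dimension 3, let x₀ ∈ E, and let f : E → ℝ be strongly differentiable at x₀ with gradient g. For affinely independent points a₁, a₂, a₃, a₄ ∈ E, let ā₁ be the reflection of a₁ across the affine span of {a₂, a₃, a₄} and ā₂ the reflection of a₂ across the affine span of {a₃, a₄}, and set r̄(a₁,a₂,a₃,a₄) = ((f(ā₁) − f(a₁))/‖ā₁ − a₁‖²) • (ā₁ − a₁) + ((f(ā₂) − f(a₂))/‖ā₂ − a₂‖²) • (ā₂ − a₂) + ((f(a₄) − f(a₃))/‖a₄ − a₃‖²) • (a₄ − a₃). Then for every ε > 0 there exists δ > 0 such that whenever a₁, a₂, a₃, a₄ are affinely independent and ‖aᵢ − x₀‖ < δ for i = 1,2,3,4, one has ‖r̄(a₁,a₂,a₃,a₄) − g‖ < ε; in other words, r̄ tends to g as the non-degenerate tetrahedron with vertices a₁, a₂, a₃, a₄ contracts to x₀. -/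
open EuclideanGeometry
open scoped InnerProductSpace

lemma refl_sub_mem_orth {E : Type*} [NormedAddCommGroup E] [InnerProductSpace ℝ E] [FiniteDimensional ℝ E]
    (s : AffineSubspace ℝ E) [Nonempty s] (p : E) :
    reflection s p - p ∈ s.directionᗮ := by
  have h := vsub_orthogonalProjection_mem_direction_orthogonal s p
  have heq : reflection s p - p
      = -((p -ᵥ (orthogonalProjection s p : E)) + (p -ᵥ (orthogonalProjection s p : E))) := by
    rw [EuclideanGeometry.reflection_apply']
    simp only [vsub_eq_sub, vadd_eq_add]; abel
  rw [heq]
  exact Submodule.neg_mem _ (Submodule.add_mem _ h h)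

lemma refl_sub_mem_dir {E : Type*} [NormedAddCommGroup E] [InnerProductSpace ℝ E] [FiniteDimensional ℝ E]
    {s t : AffineSubspace ℝ E} [Nonempty s] (hst : s ≤ t) {p : E}
    (hp : p ∈ t) : reflection s p - p ∈ t.direction := by
  have hd : (orthogonalProjection s p : E) - p ∈ t.direction :=
    AffineSubspace.vsub_mem_direction (hst (orthogonalProjection s p).2) hp
  have heq : reflection s p - p
      = ((orthogonalProjection s p : E) - p) + ((orthogonalProjection s p : E) - p) := by
    rw [EuclideanGeometry.reflection_apply']
    simp only [vsub_eq_sub, vadd_eq_add]; abel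
  rw [heq]
  exact Submodule.add_mem _ hd hd

lemma refl_close {E : Type*} [NormedAddCommGroup E] [InnerProductSpace ℝ E] [FiniteDimensional ℝ E]
    (s : AffineSubspace ℝ E) [Nonempty s] {p q x₀ : E} (hq : q ∈ s)
    {δ : ℝ} (hp : ‖p - x₀‖ < δ/3) (hqx : ‖q - x₀‖ < δ/3) :
    ‖reflection s p - x₀‖ < δ := by
  have h := dist_reflection_eq_of_mem s hq p
  rw [dist_eq_norm, dist_eq_norm] at h
  have h1 : ‖reflection s p - x₀‖ ≤ ‖reflection s p - q‖ + ‖q - x₀‖ :=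
    norm_sub_le_norm_sub_add_norm_sub _ _ _
  have h2 : ‖q - p‖ ≤ ‖q - x₀‖ + ‖p - x₀‖ := by
    simpa [norm_sub_rev x₀ p] using norm_sub_le_norm_sub_add_norm_sub q x₀ p
  have h3 : ‖reflection s p - q‖ = ‖q - p‖ := by rw [norm_sub_rev, h]
  linarith

lemma orth_decomp_bound {E : Type*} [NormedAddCommGroup E] [InnerProductSpace ℝ E] [FiniteDimensional ℝ E]
    (hdim : Module.finrank ℝ E = 3)
    (u₁ u₂ u₃ : E) (hne1 : u₁ ≠ 0) (hne2 : u₂ ≠ 0) (hne3 : u₃ ≠ 0)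
    (h12 : ⟪u₁, u₂⟫_ℝ = 0) (h13 : ⟪u₁, u₃⟫_ℝ = 0) (h23 : ⟪u₂, u₃⟫_ℝ = 0)
    (w : E) (c : ℝ)
    (hb1 : |⟪u₁, w⟫_ℝ| ≤ c * ‖u₁‖) (hb2 : |⟪u₂, w⟫_ℝ| ≤ c * ‖u₂‖)
    (hb3 : |⟪u₃, w⟫_ℝ| ≤ c * ‖u₃‖) :
    ‖w‖ ≤ 3 * c := by
  set u : Fin 3 → E := ![u₁, u₂, u₃] with hu
  have hne : ∀ i, u i ≠ 0 := by
    intro i; fin_cases i <;> simpa [hu] using ‹_›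
  have hn : ∀ i, ‖u i‖ ≠ 0 := fun i => norm_ne_zero_iff.mpr (hne i)
  have horth : ∀ i j, i ≠ j → ⟪u i, u j⟫_ℝ = 0 := by
    intro i j hij
    fin_cases i <;> fin_cases j <;> simp only [hu] <;>
      first
        | exact absurd rfl hij
        | simpa using h12
        | simpa using h13
        | simpa using h23
        | (rw [real_inner_comm]; simpa using h12)
        | (rw [real_inner_comm]; simpa using h13)
        | (rw [real_inner_comm]; simpa using h23)
  have hb : ∀ i, |⟪u i, w⟫_ℝ| ≤ c * ‖u i‖ := by
    intro i; fin_cases i <;> simpa [hu] using ‹_›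
  have hc : 0 ≤ c := by
    have := (abs_nonneg (⟪u₁, w⟫_ℝ)).trans hb1
    nlinarith [norm_pos_iff.mpr hne1]
  set e : Fin 3 → E := fun i => ‖u i‖⁻¹ • u i with he
  have hnorm : ∀ i, ‖e i‖ = 1 := by
    intro i
    show ‖‖u i‖⁻¹ • u i‖ = 1
    rw [norm_smul, norm_inv, norm_norm, inv_mul_cancel₀ (hn i)]
  have hon : Orthonormal ℝ e := by
    rw [orthonormal_iff_ite]
    intro i j
    by_cases h : i = j
    · subst h
      rw [if_pos rfl, real_inner_self_eq_norm_mul_norm, hnorm i, mul_one]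
    · simp [he, h, real_inner_smul_left, real_inner_smul_right, horth i j h]
  have hcard : Fintype.card (Fin 3) = Module.finrank ℝ E := by simp [hdim]
  have htop : ⊤ ≤ Submodule.span ℝ (Set.range e) :=
    (hon.linearIndependent.span_eq_top_of_card_eq_finrank hcard).ge
  let b : OrthonormalBasis (Fin 3) ℝ E := OrthonormalBasis.mk hon htop
  have hbe : ∀ i, b i = e i := fun i =>
    congrFun (OrthonormalBasis.coe_mk hon htop) i
  have hw : ∑ i, ⟪b i, w⟫_ℝ • b i = w := by
    have h := b.sum_repr w
    calc ∑ i, ⟪b i, w⟫_ℝ • b i = ∑ i, b.repr w i • b i := by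
          simp_rw [b.repr_apply_apply]
      _ = w := h
  calc ‖w‖ = ‖∑ i, ⟪b i, w⟫_ℝ • b i‖ := by rw [hw]
    _ ≤ ∑ i, ‖⟪b i, w⟫_ℝ • b i‖ := norm_sum_le _ _
    _ ≤ ∑ _i : Fin 3, c := by
        apply Finset.sum_le_sum
        intro i _
        rw [norm_smul, hbe i]
        have h1 : ‖e i‖ = 1 := hon.1 i
        rw [h1, mul_one, he]
        simp only [real_inner_smul_left]
        rw [Real.norm_eq_abs, abs_mul, abs_inv, abs_norm]
        calc ‖u i‖⁻¹ * |⟪u i, w⟫_ℝ| ≤ ‖u i‖⁻¹ * (c * ‖u i‖) :=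
              mul_le_mul_of_nonneg_left (hb i) (by positivity)
          _ = c := by
              rw [mul_comm c, ← mul_assoc, inv_mul_cancel₀ (hn i), one_mul]
    _ = 3 * c := by simp [Finset.sum_const]; try ring


/-- If `f : E → ℝ` (with `dim E = 3`) is strongly differentiable at `x₀` with gradient `g`,
then the mean multi-difference quotient
`r̄ = ((f ā₁ − f a₁)/‖ā₁ − a₁‖²) • (ā₁ − a₁) + ((f ā₂ − f a₂)/‖ā₂ − a₂‖²) • (ā₂ − a₂)
    + ((f a₄ − f a₃)/‖a₄ − a₃‖²) • (a₄ − a₃)`,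
where `ā₁` is the reflection of `a₁` across the affine span of `{a₂, a₃, a₄}` and `ā₂` the
reflection of `a₂` across the affine span of `{a₃, a₄}`, converges to `g` as the non-degenerate
tetrahedron with vertices `a₁, a₂, a₃, a₄` contracts to `x₀`. -/
theorem mean_secant_hyperplane_tendsto_gradient_dim3
    {E : Type*} [NormedAddCommGroup E] [InnerProductSpace ℝ E] [FiniteDimensional ℝ E]
    (hdim : Module.finrank ℝ E = 3) (x₀ : E) (f : E → ℝ) (g : E)
    (hf : ∀ ε > (0 : ℝ), ∃ δ > (0 : ℝ), ∀ u v : E,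
      ‖u - x₀‖ < δ → ‖v - x₀‖ < δ → |f u - f v - ⟪g, u - v⟫_ℝ| ≤ ε * ‖u - v‖) :
    ∀ ε > (0 : ℝ), ∃ δ > (0 : ℝ), ∀ a₁ a₂ a₃ a₄ : E,
      AffineIndependent ℝ ![a₁, a₂, a₃, a₄] →
      ‖a₁ - x₀‖ < δ → ‖a₂ - x₀‖ < δ → ‖a₃ - x₀‖ < δ → ‖a₄ - x₀‖ < δ →
      ‖(((f (mirror {a₂, a₃, a₄} a₁) - f a₁) / ‖mirror {a₂, a₃, a₄} a₁ - a₁‖ ^ 2) •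
            (mirror {a₂, a₃, a₄} a₁ - a₁) +
          ((f (mirror {a₃, a₄} a₂) - f a₂) / ‖mirror {a₃, a₄} a₂ - a₂‖ ^ 2) •
            (mirror {a₃, a₄} a₂ - a₂) +
          ((f a₄ - f a₃) / ‖a₄ - a₃‖ ^ 2) • (a₄ - a₃)) - g‖ < ε := by
  intro ε hε
  obtain ⟨δ, hδ, hδf⟩ := hf (ε/4) (by positivity)
  refine ⟨δ/3, by positivity, ?_⟩
  intro a₁ a₂ a₃ a₄ hind h1 h2 h3 h4
  have hs1ne : ({a₂, a₃, a₄} : Set E).Nonempty := ⟨a₂, by simp⟩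
  have hs2ne : ({a₃, a₄} : Set E).Nonempty := ⟨a₃, by simp⟩
  set S₁ := affineSpan ℝ ({a₂, a₃, a₄} : Set E) with hS₁
  set S₂ := affineSpan ℝ ({a₃, a₄} : Set E) with hS₂
  haveI : Nonempty S₁ := ((affineSpan_nonempty ℝ).mpr hs1ne).to_subtype
  haveI : Nonempty S₂ := ((affineSpan_nonempty ℝ).mpr hs2ne).to_subtype
  have hm1 : mirror {a₂, a₃, a₄} a₁ = reflection S₁ a₁ := by
    rw [mirror, dif_pos hs1ne]
  have hm2 : mirror {a₃, a₄} a₂ = reflection S₂ a₂ := by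
    rw [mirror, dif_pos hs2ne]
  rw [hm1, hm2]
  have ha2S1 : a₂ ∈ S₁ := subset_affineSpan ℝ _ (by simp)
  have ha3S1 : a₃ ∈ S₁ := subset_affineSpan ℝ _ (by simp)
  have ha4S1 : a₄ ∈ S₁ := subset_affineSpan ℝ _ (by simp)
  have ha3S2 : a₃ ∈ S₂ := subset_affineSpan ℝ _ (by simp)
  have ha4S2 : a₄ ∈ S₂ := subset_affineSpan ℝ _ (by simp)
  have hS21 : S₂ ≤ S₁ := affineSpan_mono ℝ (by intro x hx; simp at hx ⊢; tauto)
  set v₁ := reflection S₁ a₁ - a₁ with hv₁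
  set v₂ := reflection S₂ a₂ - a₂ with hv₂
  set v₃ := a₄ - a₃ with hv₃
  have hmo1 : v₁ ∈ S₁.directionᗮ := refl_sub_mem_orth S₁ a₁
  have hmo2 : v₂ ∈ S₂.directionᗮ := refl_sub_mem_orth S₂ a₂
  have hmd2 : v₂ ∈ S₁.direction := refl_sub_mem_dir hS21 ha2S1
  have hmd3 : v₃ ∈ S₂.direction := AffineSubspace.vsub_mem_direction ha4S2 ha3S2
  have hmd3' : v₃ ∈ S₁.direction := AffineSubspace.vsub_mem_direction ha4S1 ha3S1
  have h12 : ⟪v₁, v₂⟫_ℝ = 0 := by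
    rw [real_inner_comm]; exact hmo1 v₂ hmd2
  have h13 : ⟪v₁, v₃⟫_ℝ = 0 := by
    rw [real_inner_comm]; exact hmo1 v₃ hmd3'
  have h23 : ⟪v₂, v₃⟫_ℝ = 0 := by
    rw [real_inner_comm]; exact hmo2 v₃ hmd3
  have h21 : ⟪v₂, v₁⟫_ℝ = 0 := by rw [real_inner_comm]; exact h12
  have h31 : ⟪v₃, v₁⟫_ℝ = 0 := by rw [real_inner_comm]; exact h13
  have h32 : ⟪v₃, v₂⟫_ℝ = 0 := by rw [real_inner_comm]; exact h23
  have ha1S1 : a₁ ∉ S₁ := by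
    have h := hind.notMem_affineSpan_diff 0 Set.univ
    have himg : (![a₁, a₂, a₃, a₄] '' (Set.univ \ {0}) : Set E) = {a₂, a₃, a₄} := by
      have hs : (Set.univ \ {0} : Set (Fin 4)) = {1, 2, 3} := by
        ext x; fin_cases x <;> simp
      rw [hs]
      simp [Set.image_insert_eq]
    rwa [himg] at h
  have ha2S2 : a₂ ∉ S₂ := by
    have h := hind.notMem_affineSpan_diff 1 {2, 3}
    have himg : (![a₁, a₂, a₃, a₄] '' ({2, 3} \ {1}) : Set E) = {a₃, a₄} := by
      have hs : ({2, 3} \ {1} : Set (Fin 4)) = {2, 3} := by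
        ext x; fin_cases x <;> simp
      rw [hs]
      simp [Set.image_insert_eq]
    rwa [himg] at h
  have hv1ne : v₁ ≠ 0 := by
    rw [hv₁, sub_ne_zero]
    intro h
    exact ha1S1 ((EuclideanGeometry.reflection_eq_self_iff a₁).mp h)
  have hv2ne : v₂ ≠ 0 := by
    rw [hv₂, sub_ne_zero]
    intro h
    exact ha2S2 ((EuclideanGeometry.reflection_eq_self_iff a₂).mp h)
  have hv3ne : v₃ ≠ 0 := by
    rw [hv₃, sub_ne_zero]
    intro h
    have := hind.injective (show ![a₁, a₂, a₃, a₄] 3 = ![a₁, a₂, a₃, a₄] 2 by simpa using h)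
    simp at this
  have hn1 : ‖v₁‖ ≠ 0 := norm_ne_zero_iff.mpr hv1ne
  have hn2 : ‖v₂‖ ≠ 0 := norm_ne_zero_iff.mpr hv2ne
  have hn3 : ‖v₃‖ ≠ 0 := norm_ne_zero_iff.mpr hv3ne
  set r : E := ((f (reflection S₁ a₁) - f a₁) / ‖v₁‖ ^ 2) • v₁ +
      ((f (reflection S₂ a₂) - f a₂) / ‖v₂‖ ^ 2) • v₂ +
      ((f a₄ - f a₃) / ‖v₃‖ ^ 2) • v₃ with hr
  show ‖r - g‖ < ε
  have hir1 : ⟪v₁, r⟫_ℝ = f (reflection S₁ a₁) - f a₁ := by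
    rw [hr]
    simp only [inner_add_right, real_inner_smul_right, h12, h13,
      real_inner_self_eq_norm_sq]
    field_simp
    ring
  have hir2 : ⟪v₂, r⟫_ℝ = f (reflection S₂ a₂) - f a₂ := by
    rw [hr]
    simp only [inner_add_right, real_inner_smul_right, h23, h21,
      real_inner_self_eq_norm_sq]
    field_simp
    ring
  have hir3 : ⟪v₃, r⟫_ℝ = f a₄ - f a₃ := by
    rw [hr]
    simp only [inner_add_right, real_inner_smul_right, h31, h32, real_inner_self_eq_norm_sq]
    field_simp
    ring
  have hc1 : ‖reflection S₁ a₁ - x₀‖ < δ := refl_close S₁ ha2S1 h1 h2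
  have hc2 : ‖reflection S₂ a₂ - x₀‖ < δ := refl_close S₂ ha3S2 h2 h3
  have hd3 : δ/3 < δ := by linarith
  have hb1 : |f (reflection S₁ a₁) - f a₁ - ⟪g, v₁⟫_ℝ| ≤ ε/4 * ‖v₁‖ := by
    have := hδf (reflection S₁ a₁) a₁ hc1 (h1.trans hd3)
    rwa [← hv₁] at this
  have hb2 : |f (reflection S₂ a₂) - f a₂ - ⟪g, v₂⟫_ℝ| ≤ ε/4 * ‖v₂‖ := by
    have := hδf (reflection S₂ a₂) a₂ hc2 (h2.trans hd3)
    rwa [← hv₂] at this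
  have hb3 : |f a₄ - f a₃ - ⟪g, v₃⟫_ℝ| ≤ ε/4 * ‖v₃‖ := by
    have := hδf a₄ a₃ (h4.trans hd3) (h3.trans hd3)
    rwa [← hv₃] at this
  have hcb1 : |⟪v₁, r - g⟫_ℝ| ≤ ε/4 * ‖v₁‖ := by
    rw [inner_sub_right, hir1, real_inner_comm]; exact hb1
  have hcb2 : |⟪v₂, r - g⟫_ℝ| ≤ ε/4 * ‖v₂‖ := by
    rw [inner_sub_right, hir2, real_inner_comm]; exact hb2
  have hcb3 : |⟪v₃, r - g⟫_ℝ| ≤ ε/4 * ‖v₃‖ := by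
    rw [inner_sub_right, hir3, real_inner_comm]; exact hb3
  have hfin : ‖r - g‖ ≤ 3 * (ε/4) :=
    orth_decomp_bound hdim v₁ v₂ v₃ hv1ne hv2ne hv3ne h12 h13 h23 (r - g) (ε/4)
      hcb1 hcb2 hcb3
  linarith
end

section
/- Let n ≥ 2, let E be a real inner product space of dimension n, let x₀ ∈ E, and let f : E → ℝ be strongly differentiable at x₀ with gradient g. For affinely independent points a₁, …, a_{n+1} ∈ E, for 1 ≤ i ≤ n−1 let āᵢ be the reflection of aᵢ across the affine span of the points a_{i+1}, …, a_{n+1}, and set r̄ = Σ_{i=1}^{n−1} ((f(āᵢ) − f(aᵢ))/‖āᵢ − aᵢ‖²) • (āᵢ − aᵢ) + ((f(a_{n+1}) − f(aₙ))/‖a_{n+1} − aₙ‖²) • (a_{n+1} − aₙ). Then for every ε > 0 there exists δ > 0 such that whenever a₁, …, a_{n+1} are affinely independent and ‖aᵢ − x₀‖ < δ for all i, one has ‖r̄ − g‖ < ε; in other words, r̄ tends to g as the non-degenerate simplex with vertices a₁, …, a_{n+1} contracts to x₀. -/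
open EuclideanGeometry
open scoped InnerProductSpace

/-- Given points `a 0, …, a n` (the paper's `a₁, …, a_{n+1}`), `mirrored n a i` (for
`i : Fin (n-1)`, the paper's index `i+1 ∈ {1, …, n−1}`) is the reflection of the point `a i`
across the affine span of the points `a j`, `j > i`. -/
noncomputable def mirrored {E : Type*} [NormedAddCommGroup E] [InnerProductSpace ℝ E]
    [FiniteDimensional ℝ E] (n : ℕ) (a : Fin (n + 1) → E) (i : Fin (n - 1)) : E :=
  mirror (a '' {j | Fin.castLE (by omega) i < j}) (a (Fin.castLE (by omega) i))

/-- The mean multi-difference quotient vector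
`r̄ = Σ_{i=1}^{n−1} ((f āᵢ − f aᵢ)/‖āᵢ − aᵢ‖²) • (āᵢ − aᵢ)
    + ((f a_{n+1} − f aₙ)/‖a_{n+1} − aₙ‖²) • (a_{n+1} − aₙ)` (0-based indexing). -/
noncomputable def meanRatio {E : Type*} [NormedAddCommGroup E] [InnerProductSpace ℝ E]
    [FiniteDimensional ℝ E] (n : ℕ) (f : E → ℝ) (a : Fin (n + 1) → E) : E :=
  (∑ i : Fin (n - 1),
      ((f (mirrored n a i) - f (a (Fin.castLE (by omega) i))) /
          ‖mirrored n a i - a (Fin.castLE (by omega) i)‖ ^ 2) •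
        (mirrored n a i - a (Fin.castLE (by omega) i))) +
    ((f (a (Fin.last n)) - f (a ⟨n - 1, by omega⟩)) /
        ‖a (Fin.last n) - a ⟨n - 1, by omega⟩‖ ^ 2) •
      (a (Fin.last n) - a ⟨n - 1, by omega⟩)

set_option linter.unusedSectionVars false
set_option linter.unusedVariables false

section MirrorAux

variable {E : Type*} [NormedAddCommGroup E] [InnerProductSpace ℝ E] [FiniteDimensional ℝ E]

lemma mirror_sub_mem_orthogonal (s : Set E) (hs : s.Nonempty) (p : E) :
    mirror s p - p ∈ (affineSpan ℝ s).directionᗮ := by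
  haveI : Nonempty (affineSpan ℝ s) := ((affineSpan_nonempty ℝ (s := s)).mpr hs).to_subtype
  rw [mirror, dif_pos hs]
  have h := vsub_orthogonalProjection_mem_direction_orthogonal (affineSpan ℝ s) p
  have heq : EuclideanGeometry.reflection (affineSpan ℝ s) p - p
      = (-2 : ℝ) • (p -ᵥ (orthogonalProjection (affineSpan ℝ s) p : E)) := by
    rw [EuclideanGeometry.reflection_apply']
    simp only [vsub_eq_sub, vadd_eq_add]
    module
  rw [heq]
  exact Submodule.smul_mem _ _ h

lemma mirror_sub_mem_direction (s : Set E) (hs : s.Nonempty)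
    {Q : AffineSubspace ℝ E} (hQ : affineSpan ℝ s ≤ Q) {p : E} (hp : p ∈ Q) :
    mirror s p - p ∈ Q.direction := by
  haveI : Nonempty (affineSpan ℝ s) := ((affineSpan_nonempty ℝ (s := s)).mpr hs).to_subtype
  rw [mirror, dif_pos hs]
  have hq : (orthogonalProjection (affineSpan ℝ s) p : E) ∈ Q :=
    hQ (orthogonalProjection_mem p)
  have h := AffineSubspace.vsub_mem_direction hq hp
  have heq : EuclideanGeometry.reflection (affineSpan ℝ s) p - p
      = (2 : ℝ) • ((orthogonalProjection (affineSpan ℝ s) p : E) -ᵥ p) := by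
    rw [EuclideanGeometry.reflection_apply']
    simp only [vsub_eq_sub, vadd_eq_add]
    module
  rw [heq]
  exact Submodule.smul_mem _ _ h

lemma mirror_ne (s : Set E) (hs : s.Nonempty) {p : E} (hp : p ∉ affineSpan ℝ s) :
    mirror s p ≠ p := by
  haveI : Nonempty (affineSpan ℝ s) := ((affineSpan_nonempty ℝ (s := s)).mpr hs).to_subtype
  rw [mirror, dif_pos hs]
  exact fun h => hp ((EuclideanGeometry.reflection_eq_self_iff p).mp h)

lemma dist_mirror_of_mem (s : Set E) (hs : s.Nonempty) {q : E} (hq : q ∈ affineSpan ℝ s) (p : E) :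
    dist q (mirror s p) = dist q p := by
  haveI : Nonempty (affineSpan ℝ s) := ((affineSpan_nonempty ℝ (s := s)).mpr hs).to_subtype
  rw [mirror, dif_pos hs]
  exact dist_reflection_eq_of_mem _ hq p

end MirrorAux


section Main

variable {E : Type*} [NormedAddCommGroup E] [InnerProductSpace ℝ E] [FiniteDimensional ℝ E]

noncomputable def uu (m : ℕ) (a : Fin (m + 2) → E) (i : Fin (m + 1)) : E :=
  if h : (i : ℕ) < m then mirror (a '' {j : Fin (m + 2) | i.castSucc < j}) (a i.castSucc)
  else a (Fin.last (m + 1))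

noncomputable def ww (m : ℕ) (a : Fin (m + 2) → E) (i : Fin (m + 1)) : E := a i.castSucc

noncomputable def vv (m : ℕ) (a : Fin (m + 2) → E) (i : Fin (m + 1)) : E := uu m a i - ww m a i

lemma SS_nonempty (m : ℕ) (a : Fin (m + 2) → E) (i : Fin (m + 1)) :
    (a '' {j : Fin (m + 2) | i.castSucc < j}).Nonempty :=
  ⟨a (Fin.last (m + 1)), ⟨Fin.last (m + 1), Fin.castSucc_lt_last i, rfl⟩⟩

lemma uu_castSucc (m : ℕ) (a : Fin (m + 2) → E) (i : Fin m) :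
    uu m a i.castSucc = mirrored (m + 1) a i := by
  have h : ((i.castSucc : Fin (m + 1)) : ℕ) < m := i.isLt
  rw [uu, dif_pos h]
  rfl

lemma meanRatio_eq (m : ℕ) (f : E → ℝ) (a : Fin (m + 2) → E) :
    meanRatio (m + 1) f a
      = ∑ i : Fin (m + 1), ((f (uu m a i) - f (ww m a i)) / ‖vv m a i‖ ^ 2) • vv m a i := by
  rw [Fin.sum_univ_castSucc, meanRatio]
  congr 1
  · refine Finset.sum_congr rfl fun i _ => ?_
    rw [vv, ww, uu_castSucc]
    rfl
  · rw [vv, ww, uu, dif_neg (by simp)]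
    rfl

lemma vv_orth (m : ℕ) (a : Fin (m + 2) → E) {i j : Fin (m + 1)} (hij : i < j) :
    ⟪vv m a i, vv m a j⟫_ℝ = 0 := by
  have hij' : (i : ℕ) < (j : ℕ) := hij
  have hi : (i : ℕ) < m := by have := j.isLt; omega
  have hmem : ∀ k : Fin (m + 2), i.castSucc < k →
      a k ∈ affineSpan ℝ (a '' {k : Fin (m + 2) | i.castSucc < k}) :=
    fun k hk => mem_affineSpan ℝ ⟨k, hk, rfl⟩
  have h1 : vv m a i ∈ (affineSpan ℝ (a '' {k : Fin (m + 2) | i.castSucc < k})).directionᗮ := by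
    rw [vv, ww, uu, dif_pos hi]
    exact mirror_sub_mem_orthogonal _ (SS_nonempty m a i) _
  have hjc : i.castSucc < j.castSucc := by rwa [Fin.castSucc_lt_castSucc_iff]
  have h2 : vv m a j ∈ (affineSpan ℝ (a '' {k : Fin (m + 2) | i.castSucc < k})).direction := by
    rcases lt_or_ge (j : ℕ) m with h | h
    · rw [vv, ww, uu, dif_pos h]
      refine mirror_sub_mem_direction _ (SS_nonempty m a j) (affineSpan_mono ℝ ?_) (hmem _ hjc)
      exact Set.image_mono fun k hk => lt_trans hjc hk
    · rw [vv, ww, uu, dif_neg (by omega)]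
      exact AffineSubspace.vsub_mem_direction (hmem _ (Fin.castSucc_lt_last i)) (hmem _ hjc)
  exact (Submodule.mem_orthogonal' _ _).1 h1 _ h2

lemma vv_ne_zero (m : ℕ) {a : Fin (m + 2) → E} (ha : AffineIndependent ℝ a) (i : Fin (m + 1)) :
    vv m a i ≠ 0 := by
  rcases lt_or_ge (i : ℕ) m with h | h
  · rw [vv, ww, uu, dif_pos h, sub_ne_zero]
    apply mirror_ne _ (SS_nonempty m a i)
    have h2 := ha.notMem_affineSpan_diff i.castSucc {k : Fin (m + 2) | i.castSucc < k}
    rwa [Set.diff_singleton_eq_self (by simp)] at h2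
  · rw [vv, ww, uu, dif_neg (by omega), sub_ne_zero]
    intro heq
    have h2 : ((Fin.last (m + 1) : Fin (m + 2)) : ℕ) = ((i.castSucc : Fin (m + 2)) : ℕ) :=
      congrArg Fin.val (ha.injective heq)
    simp only [Fin.val_last, Fin.coe_castSucc] at h2
    omega

lemma g_decomp (m : ℕ) (hdim : Module.finrank ℝ E = m + 1) {a : Fin (m + 2) → E}
    (ha : AffineIndependent ℝ a) (g : E) :
    g = ∑ i : Fin (m + 1), (⟪vv m a i, g⟫_ℝ / ‖vv m a i‖ ^ 2) • vv m a i := by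
  set v := vv m a with hv
  have hvne : ∀ i, v i ≠ 0 := vv_ne_zero m ha
  have hvn : ∀ i, ‖v i‖ ≠ 0 := fun i => norm_ne_zero_iff.2 (hvne i)
  have hon : Orthonormal ℝ (fun i => (‖v i‖)⁻¹ • v i) := by
    rw [orthonormal_iff_ite]
    intro i j
    rcases eq_or_ne i j with rfl | h
    · rw [if_pos rfl, real_inner_self_eq_norm_sq, norm_smul, norm_inv, norm_norm,
        inv_mul_cancel₀ (hvn i), one_pow]
    · have h0 : ⟪v i, v j⟫_ℝ = 0 := by
        rcases lt_or_gt_of_ne h with hlt | hlt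
        · exact vv_orth m a hlt
        · rw [real_inner_comm]; exact vv_orth m a hlt
      simp [h, real_inner_smul_left, real_inner_smul_right, h0]
  have hcard : Fintype.card (Fin (m + 1)) = Module.finrank ℝ E := by simp [hdim]
  have hli := hon.linearIndependent
  have hsp : ⊤ ≤ Submodule.span ℝ (Set.range (fun i => (‖v i‖)⁻¹ • v i)) := by
    have h2 := (basisOfLinearIndependentOfCardEqFinrank hli hcard).span_eq
    rw [coe_basisOfLinearIndependentOfCardEqFinrank] at h2
    rw [h2]
  have hrep := (OrthonormalBasis.mk hon hsp).sum_repr' g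
  rw [OrthonormalBasis.coe_mk] at hrep
  conv_lhs => rw [← hrep]
  refine Finset.sum_congr rfl fun i _ => ?_
  rw [real_inner_smul_left, smul_smul]
  congr 1
  rw [pow_two]
  field_simp [hvn i]

end Main

/-- If `f : E → ℝ` (with `dim E = n`, `n ≥ 2`) is strongly differentiable at `x₀` with
gradient `g`, then the mean multi-difference quotient `r̄` built on a non-degenerate simplex
with vertices `a 0, …, a n` converges to `g` as the simplex contracts to `x₀`. -/
theorem mean_secant_hyperplane_tendsto_gradient
    {E : Type*} [NormedAddCommGroup E] [InnerProductSpace ℝ E] [FiniteDimensional ℝ E]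
    (n : ℕ) (hn : 2 ≤ n) (hdim : Module.finrank ℝ E = n) (x₀ : E) (f : E → ℝ) (g : E)
    (hf : ∀ ε > (0 : ℝ), ∃ δ > (0 : ℝ), ∀ u v : E,
      ‖u - x₀‖ < δ → ‖v - x₀‖ < δ → |f u - f v - ⟪g, u - v⟫_ℝ| ≤ ε * ‖u - v‖) :
    ∀ ε > (0 : ℝ), ∃ δ > (0 : ℝ), ∀ a : Fin (n + 1) → E,
      AffineIndependent ℝ a → (∀ i, ‖a i - x₀‖ < δ) →
      ‖meanRatio n f a - g‖ < ε := by
  obtain ⟨m, rfl⟩ : ∃ m, n = m + 1 := ⟨n - 1, by omega⟩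
  intro ε hε
  have hε2 : (0 : ℝ) < ε / (m + 2) := by positivity
  obtain ⟨δ, hδ, hfd⟩ := hf (ε / (m + 2)) hε2
  refine ⟨δ / 3, by positivity, fun a ha hclose => ?_⟩
  have hvne : ∀ i, vv m a i ≠ 0 := vv_ne_zero m ha
  have hnormu : ∀ i : Fin (m + 1), ‖uu m a i - x₀‖ < δ := by
    intro i
    rcases lt_or_ge (i : ℕ) m with h | h
    · rw [uu, dif_pos h]
      have hlast : a (Fin.last (m + 1)) ∈
          affineSpan ℝ (a '' {k : Fin (m + 2) | i.castSucc < k}) :=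
        mem_affineSpan ℝ ⟨_, Fin.castSucc_lt_last i, rfl⟩
      have hd := dist_mirror_of_mem _ (SS_nonempty m a i) hlast (a i.castSucc)
      have h1 := hclose (Fin.last (m + 1))
      have h2 := hclose i.castSucc
      rw [← dist_eq_norm] at h1 h2 ⊢
      calc dist (mirror (a '' {k : Fin (m + 2) | i.castSucc < k}) (a i.castSucc)) x₀
          ≤ dist (mirror (a '' {k : Fin (m + 2) | i.castSucc < k}) (a i.castSucc))
              (a (Fin.last (m + 1))) + dist (a (Fin.last (m + 1))) x₀ := dist_triangle _ _ _
        _ = dist (a (Fin.last (m + 1)))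
              (mirror (a '' {k : Fin (m + 2) | i.castSucc < k}) (a i.castSucc))
            + dist (a (Fin.last (m + 1))) x₀ := by rw [dist_comm]
        _ = dist (a (Fin.last (m + 1))) (a i.castSucc) + dist (a (Fin.last (m + 1))) x₀ := by
              rw [hd]
        _ ≤ (dist (a (Fin.last (m + 1))) x₀ + dist x₀ (a i.castSucc))
            + dist (a (Fin.last (m + 1))) x₀ := by gcongr; exact dist_triangle _ _ _
        _ < δ := by rw [dist_comm x₀] ; linarith
    · rw [uu, dif_neg (by omega)]
      have := hclose (Fin.last (m + 1))
      linarith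
  have hnormw : ∀ i : Fin (m + 1), ‖ww m a i - x₀‖ < δ := by
    intro i
    rw [ww]
    have := hclose i.castSucc
    linarith
  have hquot : ∀ i, |f (uu m a i) - f (ww m a i) - ⟪g, vv m a i⟫_ℝ|
      ≤ (ε / (m + 2)) * ‖vv m a i‖ := by
    intro i
    have := hfd (uu m a i) (ww m a i) (hnormu i) (hnormw i)
    rwa [show uu m a i - ww m a i = vv m a i from rfl] at this
  have hg := g_decomp m hdim ha g
  have hsplit : meanRatio (m + 1) f a - g
      = ∑ i : Fin (m + 1),
          (((f (uu m a i) - f (ww m a i)) / ‖vv m a i‖ ^ 2) • vv m a i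
            - (⟪vv m a i, g⟫_ℝ / ‖vv m a i‖ ^ 2) • vv m a i) := by
    rw [Finset.sum_sub_distrib]
    conv_lhs => rw [meanRatio_eq m f a, hg]
  rw [hsplit]
  have hbound : ∀ i ∈ (Finset.univ : Finset (Fin (m + 1))),
      ‖((f (uu m a i) - f (ww m a i)) / ‖vv m a i‖ ^ 2) • vv m a i
        - (⟪vv m a i, g⟫_ℝ / ‖vv m a i‖ ^ 2) • vv m a i‖ ≤ ε / (m + 2) := by
    intro i _
    have hvn : (0 : ℝ) < ‖vv m a i‖ := norm_pos_iff.2 (hvne i)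
    rw [← sub_smul, norm_smul, Real.norm_eq_abs]
    have hco : (f (uu m a i) - f (ww m a i)) / ‖vv m a i‖ ^ 2
          - ⟪vv m a i, g⟫_ℝ / ‖vv m a i‖ ^ 2
        = (f (uu m a i) - f (ww m a i) - ⟪g, vv m a i⟫_ℝ) / ‖vv m a i‖ ^ 2 := by
      rw [real_inner_comm]
      ring
    rw [hco, abs_div, abs_of_nonneg (by positivity : (0 : ℝ) ≤ ‖vv m a i‖ ^ 2)]
    rw [div_mul_eq_mul_div, div_le_iff₀ (by positivity)]
    have hq := hquot i
    have h3 := mul_le_mul_of_nonneg_right hq (norm_nonneg (vv m a i))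
    calc |f (uu m a i) - f (ww m a i) - ⟪g, vv m a i⟫_ℝ| * ‖vv m a i‖
        ≤ ε / (m + 2) * ‖vv m a i‖ * ‖vv m a i‖ := h3
      _ = ε / (m + 2) * ‖vv m a i‖ ^ 2 := by ring
  calc ‖∑ i : Fin (m + 1),
          (((f (uu m a i) - f (ww m a i)) / ‖vv m a i‖ ^ 2) • vv m a i
            - (⟪vv m a i, g⟫_ℝ / ‖vv m a i‖ ^ 2) • vv m a i)‖
      ≤ ∑ i : Fin (m + 1),
          ‖((f (uu m a i) - f (ww m a i)) / ‖vv m a i‖ ^ 2) • vv m a i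
            - (⟪vv m a i, g⟫_ℝ / ‖vv m a i‖ ^ 2) • vv m a i‖ := norm_sum_le _ _
    _ ≤ ∑ _i : Fin (m + 1), ε / (m + 2) := Finset.sum_le_sum hbound
    _ = (m + 1) * (ε / (m + 2)) := by
        rw [Finset.sum_const, Finset.card_univ, Fintype.card_fin, nsmul_eq_mul]
        push_cast
        ring
    _ < ε := by
        rw [mul_div_assoc']
        rw [div_lt_iff₀ (by positivity)]
        nlinarith
end

section
/- Let E be a finite-dimensional real inner product space, f : E → ℝ any function, and a, b, c ∈ E not collinear. Let ā be the reflection of a across the affine span of {b, c}, and set r̄ = ((f(ā) − f(a))/‖ā − a‖²) • (ā − a) + ((f(c) − f(b))/‖c − b‖²) • (c − b). Then in the Clifford algebra of the quadratic form Q(v) = ⟪v,v⟫ on E one has the identity (f(ā) − f(a)) • ι(c − b) − (f(c) − f(b)) • ι(ā − a) = ι(r̄) * ι(ā − a) * ι(c − b); i.e., the mean multi-difference vector equals the geometric product of r̄ with the pseudo-scalar (ā − a)(c − b), so r̄ is the Clifford quotient of the mean multi-difference vector by twice the oriented area bivector. -/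
open EuclideanGeometry CliffordAlgebra
open scoped InnerProductSpace

/-- The quadratic form `v ↦ ⟪v, v⟫` of a real inner product space. -/
noncomputable def Qf (E : Type*) [NormedAddCommGroup E] [InnerProductSpace ℝ E] :
    QuadraticForm ℝ E :=
  LinearMap.BilinMap.toQuadraticMap (innerₗ E)

lemma Qf_apply {E : Type*} [NormedAddCommGroup E] [InnerProductSpace ℝ E] (u : E) :
    Qf E u = ‖u‖ ^ 2 := by
  simp [Qf, LinearMap.BilinMap.toQuadraticMap_apply, innerₗ_apply_apply,
    real_inner_self_eq_norm_sq]

lemma Qf_isOrtho {E : Type*} [NormedAddCommGroup E] [InnerProductSpace ℝ E] {u v : E}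
    (h : ⟪u, v⟫_ℝ = 0) : (Qf E).IsOrtho u v := by
  rw [QuadraticMap.isOrtho_def]
  simp only [Qf, LinearMap.BilinMap.toQuadraticMap_apply, innerₗ_apply_apply,
    LinearMap.flip_apply, LinearMap.mk₂'ₛₗ_apply, inner_add_right, inner_add_left]
  have h2 : ⟪v, u⟫_ℝ = 0 := by rw [real_inner_comm]; exact h
  rw [h2, h]; ring

lemma clifford_key {E : Type*} [NormedAddCommGroup E] [InnerProductSpace ℝ E] {u v : E}
    (ho : ⟪u, v⟫_ℝ = 0) (α β : ℝ) :
    ι (Qf E) (α • u + β • v) * ι (Qf E) u * ι (Qf E) v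
      = (α * ‖u‖ ^ 2) • ι (Qf E) v - (β * ‖v‖ ^ 2) • ι (Qf E) u := by
  have hO := Qf_isOrtho ho
  have h1 : ι (Qf E) u * ι (Qf E) u = algebraMap ℝ _ (‖u‖ ^ 2) := by
    rw [ι_sq_scalar, Qf_apply]
  have h2 : ι (Qf E) v * ι (Qf E) v = algebraMap ℝ _ (‖v‖ ^ 2) := by
    rw [ι_sq_scalar, Qf_apply]
  have h3 : ι (Qf E) v * ι (Qf E) u = -(ι (Qf E) u * ι (Qf E) v) :=
    ι_mul_ι_comm_of_isOrtho hO.symm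
  rw [map_add, map_smul, map_smul, add_mul, add_mul, smul_mul_assoc, smul_mul_assoc,
    smul_mul_assoc, smul_mul_assoc, h1, h3, neg_mul, mul_assoc, h2,
    ← Algebra.commutes, ← Algebra.smul_def, ← Algebra.smul_def]
  rw [smul_neg, smul_smul, smul_smul, sub_eq_add_neg]

/-- For non-collinear `a, b, c` in a finite-dimensional real inner product space, with
`ā` the reflection of `a` across the affine span of `{b, c}` and
`r̄ = ((f ā − f a)/‖ā − a‖²) • (ā − a) + ((f c − f b)/‖c − b‖²) • (c − b)`,
the mean multi-difference vector equals the geometric product of `r̄` with the pseudo-scalar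
`(ā − a)(c − b)` in the Clifford algebra of `Q(v) = ⟪v, v⟫`. -/
theorem mean_multi_difference_eq_clifford_product_dim2
    {E : Type*} [NormedAddCommGroup E] [InnerProductSpace ℝ E] [FiniteDimensional ℝ E]
    (f : E → ℝ) (a b c : E) (h : ¬ Collinear ℝ ({a, b, c} : Set E)) :
    (f (mirror {b, c} a) - f a) • ι (Qf E) (c - b) -
        (f c - f b) • ι (Qf E) (mirror {b, c} a - a) =
      ι (Qf E) (((f (mirror {b, c} a) - f a) / ‖mirror {b, c} a - a‖ ^ 2) •
            (mirror {b, c} a - a) +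
          ((f c - f b) / ‖c - b‖ ^ 2) • (c - b)) *
        ι (Qf E) (mirror {b, c} a - a) * ι (Qf E) (c - b) := by
  have hbc : ({b, c} : Set E).Nonempty := ⟨b, by simp⟩
  haveI : Nonempty (affineSpan ℝ ({b, c} : Set E)) :=
    ((affineSpan_nonempty ℝ (s := ({b, c} : Set E))).mpr hbc).to_subtype
  have hmir : mirror {b, c} a = reflection (affineSpan ℝ ({b, c} : Set E)) a := by
    rw [mirror, dif_pos hbc]
  -- a is not on the line through b and c
  have ha : a ∉ affineSpan ℝ ({b, c} : Set E) := by
    intro hmem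
    exact h (((collinear_insert_iff_of_mem_affineSpan hmem).mpr (collinear_pair ℝ b c)))
  -- hence mirror a ≠ a
  have hne : mirror {b, c} a - a ≠ 0 := by
    rw [sub_ne_zero, hmir]
    intro heq
    exact ha ((EuclideanGeometry.reflection_eq_self_iff a).mp heq)
  have hcb : c - b ≠ 0 := by
    rw [sub_ne_zero]
    intro heq
    apply h
    rw [heq]
    simpa using collinear_pair ℝ a b
  -- orthogonality
  have hproj : (orthogonalProjection (affineSpan ℝ ({b, c} : Set E)) a : E) -ᵥ a ∈
      (affineSpan ℝ ({b, c} : Set E)).directionᗮ :=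
    orthogonalProjection_vsub_mem_direction_orthogonal _ a
  have hmm : mirror {b, c} a - a =
      (2 : ℝ) • ((orthogonalProjection (affineSpan ℝ ({b, c} : Set E)) a : E) - a) := by
    rw [hmir, EuclideanGeometry.reflection_apply']
    simp only [vsub_eq_sub, vadd_eq_add, two_smul]
    abel
  have hmem : mirror {b, c} a - a ∈ (affineSpan ℝ ({b, c} : Set E)).directionᗮ := by
    rw [hmm]
    exact Submodule.smul_mem _ _ hproj
  have hdir : c - b ∈ (affineSpan ℝ ({b, c} : Set E)).direction := by
    have hb : b ∈ affineSpan ℝ ({b, c} : Set E) := mem_affineSpan ℝ (by simp)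
    have hc : c ∈ affineSpan ℝ ({b, c} : Set E) := mem_affineSpan ℝ (by simp)
    simpa using AffineSubspace.vsub_mem_direction hc hb
  have ho : ⟪mirror {b, c} a - a, c - b⟫_ℝ = 0 :=
    Submodule.inner_left_of_mem_orthogonal hdir hmem
  have hnu : ‖mirror {b, c} a - a‖ ^ 2 ≠ 0 := pow_ne_zero _ (norm_ne_zero_iff.mpr hne)
  have hnv : ‖c - b‖ ^ 2 ≠ 0 := pow_ne_zero _ (norm_ne_zero_iff.mpr hcb)
  rw [clifford_key ho, div_mul_cancel₀ _ hnu, div_mul_cancel₀ _ hnv]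
end

section
/- Let n ≥ 2, let E be a finite-dimensional real inner product space, and let a₁, …, a_{n+1} ∈ E be affinely independent. For 1 ≤ i ≤ n−1 let āᵢ be the reflection of aᵢ across the affine span of a_{i+1}, …, a_{n+1}. Then in the exterior algebra of E one has (ā₁ − a₁) ∧ (ā₂ − a₂) ∧ ⋯ ∧ (ā_{n−1} − a_{n−1}) ∧ (a_{n+1} − aₙ) = 2^{n−1} • ((a₂ − a₁) ∧ (a₃ − a₁) ∧ ⋯ ∧ (a_{n+1} − a₁)), where each wedge product is the ordered product of the corresponding ι-images in ExteriorAlgebra ℝ E. -/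
open EuclideanGeometry ExteriorAlgebra

section Aux

/-- If `u` lies in the span of the `w i`, multiplying their wedge by `ι u` on the left gives 0. -/
private lemma iota_mul_ofFn_prod_eq_zero {E : Type*} [AddCommGroup E] [Module ℝ E]
    {m : ℕ} (w : Fin m → E) {u : E} (hu : u ∈ Submodule.span ℝ (Set.range w)) :
    ι ℝ u * (List.ofFn fun i => ι ℝ (w i)).prod = 0 := by
  have h : ¬ LinearIndependent ℝ (Fin.cons u w : Fin (m + 1) → E) := fun hli =>
    (linearIndependent_fin_cons.mp hli).2 hu
  have h2 := AlternatingMap.map_linearDependent (ιMulti ℝ (m + 1)) _ h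
  rw [ιMulti_apply, List.ofFn_succ] at h2
  simpa using h2

/-- If `u` lies in the span of the `w i`, multiplying their wedge by `ι u` on the right gives 0. -/
private lemma ofFn_prod_mul_iota_eq_zero {E : Type*} [AddCommGroup E] [Module ℝ E]
    {m : ℕ} (w : Fin m → E) {u : E} (hu : u ∈ Submodule.span ℝ (Set.range w)) :
    (List.ofFn fun i => ι ℝ (w i)).prod * ι ℝ u = 0 := by
  have h : ¬ LinearIndependent ℝ (Fin.snoc w u : Fin (m + 1) → E) := fun hli =>
    (linearIndependent_fin_snoc.mp hli).2 hu
  have h2 := AlternatingMap.map_linearDependent (ιMulti ℝ (m + 1)) _ h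
  rw [ιMulti_apply, List.ofFn_succ'] at h2
  simpa using h2

private lemma range_map_eq_ofFn {α : Type*} (m : ℕ) (g : ℕ → α) :
    (List.range m).map g = List.ofFn (fun i : Fin m => g i.val) := by
  apply List.ext_getElem (by simp)
  intro i h1 h2; simp

variable {E : Type*} [NormedAddCommGroup E] [InnerProductSpace ℝ E] [FiniteDimensional ℝ E]
  (n : ℕ) (a : Fin (n + 1) → E)

private def pA (k : ℕ) : E := a ⟨min k n, by omega⟩

private def pd (k : ℕ) : E := pA n a (k + 1) - pA n a k

private def pb (j : ℕ) : E := pA n a (j + 1) - pA n a 0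

private noncomputable def pV (k : ℕ) : E :=
  if h : k < n - 1 then mirrored n a ⟨k, h⟩ - pA n a k else 0

private lemma pA_eq (j : ℕ) (hj : j < n + 1) : pA n a j = a ⟨j, hj⟩ := by
  unfold pA; congr 1; ext; simp; omega

private lemma pA_sub_mem {c : ℕ} : ∀ j, c ≤ j → j ≤ n →
    pA n a j - pA n a c ∈ Submodule.span ℝ (pd n a '' Set.Ico c n) := by
  refine Nat.le_induction ?_ ?_
  · intro _; simp
  · intro j hcj ih hj
    have h1 : pA n a (j + 1) - pA n a c = pd n a j + (pA n a j - pA n a c) := by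
      unfold pd; abel
    rw [h1]
    exact add_mem (Submodule.subset_span ⟨j, ⟨hcj, by omega⟩, rfl⟩) (ih (by omega))

private lemma pV_key (k : ℕ) (hk : k < n - 1) (hn : 2 ≤ n) :
    ∃ u ∈ Submodule.span ℝ (pd n a '' Set.Ico (k + 1) n),
      pV n a k = (2 : ℝ) • pd n a k + u := by
  have hkn : k < n := by omega
  set S : Set E := a '' {j | Fin.castLE (by omega) (⟨k, hk⟩ : Fin (n - 1)) < j} with hS
  have hmem1 : a ⟨k + 1, by omega⟩ ∈ S := ⟨⟨k + 1, by omega⟩, by simp [Fin.lt_def], rfl⟩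
  have hs : S.Nonempty := ⟨_, hmem1⟩
  have hspan : vectorSpan ℝ S ≤ Submodule.span ℝ (pd n a '' Set.Ico (k + 1) n) := by
    rw [vectorSpan_def]
    refine Submodule.span_le.mpr ?_
    rintro x hx
    rw [Set.mem_vsub] at hx
    obtain ⟨y, hy, z, hz, rfl⟩ := hx
    obtain ⟨j₁, hj₁, rfl⟩ := hy
    obtain ⟨j₂, hj₂, rfl⟩ := hz
    have e1 : a j₁ -ᵥ a j₂ =
        (pA n a j₁.val - pA n a (k + 1)) - (pA n a j₂.val - pA n a (k + 1)) := by
      rw [pA_eq n a j₁.val j₁.isLt, pA_eq n a j₂.val j₂.isLt, vsub_eq_sub]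
      simp only [Fin.eta]; abel
    rw [e1]
    have hj₁' : k + 1 ≤ j₁.val := hj₁
    have hj₂' : k + 1 ≤ j₂.val := hj₂
    exact sub_mem (pA_sub_mem n a _ hj₁' (by omega)) (pA_sub_mem n a _ hj₂' (by omega))
  haveI : Nonempty (affineSpan ℝ S) := ((affineSpan_nonempty ℝ (s := S)).mpr hs).to_subtype
  set q : E := ↑(EuclideanGeometry.orthogonalProjection (affineSpan ℝ S) (pA n a k)) with hq
  have hqmem : q ∈ affineSpan ℝ S :=
    (EuclideanGeometry.orthogonalProjection (affineSpan ℝ S) (pA n a k)).2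
  have hq2 : q - pA n a (k + 1) ∈ vectorSpan ℝ S := by
    rw [← direction_affineSpan]
    have := AffineSubspace.vsub_mem_direction hqmem (subset_affineSpan ℝ S hmem1)
    rw [vsub_eq_sub] at this
    rwa [pA_eq n a (k + 1) (by omega)]
  refine ⟨(2 : ℝ) • (q - pA n a (k + 1)), Submodule.smul_mem _ _ (hspan hq2), ?_⟩
  have hVk : pV n a k = EuclideanGeometry.reflection (affineSpan ℝ S) (pA n a k) - pA n a k := by
    rw [pV, dif_pos hk]
    unfold mirrored mirror
    rw [dif_pos hs, pA_eq n a k (by omega)]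
    try rfl
  rw [hVk, EuclideanGeometry.reflection_apply', ← hq, vsub_eq_sub, vadd_eq_add]
  unfold pd
  module

end Aux

/-- For affinely independent points `a 0, …, a n` (`n ≥ 2`) in a finite-dimensional real inner
product space, in the exterior algebra one has
`(ā₁ − a₁) ∧ ⋯ ∧ (ā_{n−1} − a_{n−1}) ∧ (a_{n+1} − aₙ)
  = 2^{n−1} • ((a₂ − a₁) ∧ (a₃ − a₁) ∧ ⋯ ∧ (a_{n+1} − a₁))`
(0-based indexing; wedge products are ordered products of `ι`-images). -/
theorem mirrored_wedge_eq_two_pow_smul_simplex_wedge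
    {E : Type*} [NormedAddCommGroup E] [InnerProductSpace ℝ E] [FiniteDimensional ℝ E]
    (n : ℕ) (hn : 2 ≤ n) (a : Fin (n + 1) → E) (ha : AffineIndependent ℝ a) :
    (List.ofFn fun i : Fin (n - 1) =>
        ι ℝ (mirrored n a i - a (Fin.castLE (by omega) i))).prod *
        ι ℝ (a (Fin.last n) - a ⟨n - 1, by omega⟩) =
      (2 : ℝ) ^ (n - 1) •
        (List.ofFn fun j : Fin n => ι ℝ (a ⟨(j : ℕ) + 1, by omega⟩ - a 0)).prod := by
  -- Step 0: rewrite everything in terms of `pV`, `pd`, `pb` indexed by `ℕ`.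
  have hL : (List.ofFn fun i : Fin (n - 1) =>
      ι ℝ (mirrored n a i - a (Fin.castLE (by omega) i))) =
      (List.range (n - 1)).map (fun k => ι ℝ (pV n a k)) := by
    rw [range_map_eq_ofFn]
    congr 1
    funext i
    obtain ⟨iv, hi⟩ := i
    rw [pV, dif_pos hi, pA_eq n a iv (by omega)]
    rfl
  have hlast : a (Fin.last n) - a ⟨n - 1, by omega⟩ = pd n a (n - 1) := by
    rw [pd, show n - 1 + 1 = n from by omega, pA_eq n a n (by omega),
      pA_eq n a (n - 1) (by omega)]
    rfl
  have hR : (List.ofFn fun j : Fin n => ι ℝ (a ⟨(j : ℕ) + 1, by omega⟩ - a 0)) =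
      (List.range n).map (fun j => ι ℝ (pb n a j)) := by
    rw [range_map_eq_ofFn]
    congr 1
    funext j
    rw [pb, pA_eq n a ((j : ℕ) + 1) (by omega), pA_eq n a 0 (by omega)]
    rfl
  rw [hL, hlast, hR]
  -- Step 1: peel off reflections one at a time from the left.
  have claim1 : ∀ m, m ≤ n - 1 →
      ((List.range m).map fun i => ι ℝ (pV n a (n - 1 - m + i))).prod * ι ℝ (pd n a (n - 1)) =
        (2 : ℝ) ^ m •
          ((List.range (m + 1)).map fun j => ι ℝ (pd n a (n - 1 - m + j))).prod := by
    intro m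
    induction m with
    | zero => intro _; simp [List.range_succ]
    | succ m ihm =>
      intro hm
      have IH := ihm (by omega)
      set k := n - 1 - (m + 1) with hk
      have hk1 : n - 1 - m = k + 1 := by omega
      rw [hk1] at IH
      have hkn : k + 1 + (m + 1) = n := by omega
      rw [List.range_succ_eq_map, List.map_cons, List.map_map, List.prod_cons]
      have hf : ((fun i => ι ℝ (pV n a (k + i))) ∘ Nat.succ) =
          fun i => ι ℝ (pV n a (k + 1 + i)) := by
        funext i; simp only [Function.comp_apply]; congr 2; omega
      rw [hf, mul_assoc, IH, mul_smul_comm]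
      set T := ((List.range (m + 1)).map fun j => ι ℝ (pd n a (k + 1 + j))).prod with hT
      obtain ⟨u, hu, hVk⟩ := pV_key n a k (by omega) hn
      have hrange : Set.range (fun i : Fin (m + 1) => pd n a (k + 1 + (i : ℕ))) =
          pd n a '' Set.Ico (k + 1) n := by
        ext x
        simp only [Set.mem_range, Set.mem_image, Set.mem_Ico]
        constructor
        · rintro ⟨i, rfl⟩; exact ⟨k + 1 + i, ⟨by omega, by omega⟩, rfl⟩
        · rintro ⟨j, ⟨h1, h2⟩, rfl⟩
          exact ⟨⟨j - (k + 1), by omega⟩, by congr 1; simp; omega⟩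
      have hzero : ι ℝ u * T = 0 := by
        rw [hT, range_map_eq_ofFn]
        exact iota_mul_ofFn_prod_eq_zero _ (by rw [hrange]; exact hu)
      have hmul : ι ℝ (pV n a k) * T = (2 : ℝ) • (ι ℝ (pd n a k) * T) := by
        rw [hVk, map_add, add_mul, hzero, add_zero, map_smul, smul_mul_assoc]
      simp only [Nat.add_zero]
      rw [hmul, smul_smul]
      have hfd : ((fun j => ι ℝ (pd n a (k + j))) ∘ Nat.succ) =
          fun j => ι ℝ (pd n a (k + 1 + j)) := by
        funext i; simp only [Function.comp_apply]; congr 2; omega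
      have hD : ((List.range (m + 1 + 1)).map fun j => ι ℝ (pd n a (k + j))).prod =
          ι ℝ (pd n a k) * T := by
        rw [List.range_succ_eq_map, List.map_cons, List.map_map, List.prod_cons, hfd, hT,
          Nat.add_zero]
      rw [hD, pow_succ]
  -- Step 2: change consecutive differences into differences from the base point.
  have claim2 : ∀ k, k ≤ n →
      ((List.range k).map fun j => ι ℝ (pb n a j)).prod *
        ((List.range (n - k)).map fun j => ι ℝ (pd n a (k + j))).prod =
      ((List.range n).map fun j => ι ℝ (pd n a j)).prod := by
    intro k
    induction k with
    | zero => intro _; simp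
    | succ k ihk =>
      intro hk
      rw [← ihk (by omega)]
      have hnk : n - k = (n - (k + 1)) + 1 := by omega
      have hf : ((fun j => ι ℝ (pd n a (k + j))) ∘ Nat.succ) =
          fun j => ι ℝ (pd n a (k + 1 + j)) := by
        funext i; simp only [Function.comp_apply]; congr 2; omega
      rw [List.range_succ, hnk, List.range_succ_eq_map]
      simp only [List.map_append, List.prod_append, List.map_cons, List.map_map,
        List.prod_cons, List.map_nil, List.prod_nil, mul_one, Nat.add_zero]
      rw [hf]
      -- `Bk * ι (b k) = Bk * ι (d k)`
      have hbd : pb n a k = pd n a k + (pA n a k - pA n a 0) := by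
        unfold pb pd; abel
      have hzero : ((List.range k).map fun j => ι ℝ (pb n a j)).prod *
          ι ℝ (pA n a k - pA n a 0) = 0 := by
        rcases Nat.eq_zero_or_pos k with h0 | h0
        · subst h0; simp
        · rw [range_map_eq_ofFn]
          refine ofFn_prod_mul_iota_eq_zero _ (Submodule.subset_span ?_)
          refine ⟨⟨k - 1, by omega⟩, ?_⟩
          show pb n a (k - 1) = pA n a k - pA n a 0
          rw [pb, show k - 1 + 1 = k from by omega]
      rw [hbd, map_add, mul_add, hzero, add_zero, mul_assoc]
  have h1 := claim1 (n - 1) le_rfl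
  have h2 := claim2 n le_rfl
  simp only [Nat.sub_self, zero_add, Nat.sub_sub_self] at h1 h2
  rw [show n - 1 + 1 = n from by omega] at h1
  simp only [List.range_zero, List.map_nil, List.prod_nil, mul_one] at h2
  rw [h1, h2]
end

section
/- Let a₁, a₂, a₃, a₄ ∈ EuclideanSpace ℝ (Fin 3) be affinely independent, let ā₁ be the reflection of a₁ across the affine span of {a₂, a₃, a₄}, and let ā₂ be the reflection of a₂ across the affine span of {a₃, a₄}. Then the determinant of the 3×3 matrix whose rows are ā₁ − a₁, ā₂ − a₂, and a₄ − a₃ equals 4 times the determinant of the 3×3 matrix whose rows are a₂ − a₁, a₃ − a₁, and a₄ − a₁. -/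
open EuclideanGeometry

/-- For affinely independent `a₁, a₂, a₃, a₄` in `EuclideanSpace ℝ (Fin 3)`, with `ā₁` the
reflection of `a₁` across the affine span of `{a₂, a₃, a₄}` and `ā₂` the reflection of `a₂`
across the affine span of `{a₃, a₄}`, the determinant of the matrix with rows
`ā₁ − a₁`, `ā₂ − a₂`, `a₄ − a₃` is four times the determinant of the matrix with rows
`a₂ − a₁`, `a₃ − a₁`, `a₄ − a₁`. -/
theorem mirrored_det_eq_four_mul_det
    (a₁ a₂ a₃ a₄ : EuclideanSpace ℝ (Fin 3))
    (h : AffineIndependent ℝ ![a₁, a₂, a₃, a₄]) :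
    (Matrix.of fun i j =>
        (![mirror {a₂, a₃, a₄} a₁ - a₁, mirror {a₃, a₄} a₂ - a₂, a₄ - a₃] i) j).det =
      4 * (Matrix.of fun i j => (![a₂ - a₁, a₃ - a₁, a₄ - a₁] i) j).det := by
  classical
  have hne1 : ({a₂, a₃, a₄} : Set (EuclideanSpace ℝ (Fin 3))).Nonempty := ⟨a₂, by simp⟩
  have hne2 : ({a₃, a₄} : Set (EuclideanSpace ℝ (Fin 3))).Nonempty := ⟨a₃, by simp⟩
  haveI h1 : Nonempty (affineSpan ℝ ({a₂,a₃,a₄} : Set (EuclideanSpace ℝ (Fin 3)))) :=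
    ((affineSpan_nonempty ℝ).mpr hne1).to_subtype
  haveI h2 : Nonempty (affineSpan ℝ ({a₃,a₄} : Set (EuclideanSpace ℝ (Fin 3)))) :=
    ((affineSpan_nonempty ℝ).mpr hne2).to_subtype
  set s₁ := affineSpan ℝ ({a₂,a₃,a₄} : Set (EuclideanSpace ℝ (Fin 3))) with hs₁
  set s₂ := affineSpan ℝ ({a₃,a₄} : Set (EuclideanSpace ℝ (Fin 3))) with hs₂
  set p₁ : EuclideanSpace ℝ (Fin 3) := (orthogonalProjection s₁ a₁ : EuclideanSpace ℝ (Fin 3)) with hp1d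
  set p₂ : EuclideanSpace ℝ (Fin 3) := (orthogonalProjection s₂ a₂ : EuclideanSpace ℝ (Fin 3)) with hp2d
  -- membership facts
  have hmem1 : p₁ -ᵥ a₂ ∈ s₁.direction :=
    AffineSubspace.vsub_mem_direction (orthogonalProjection s₁ a₁).2 (mem_affineSpan ℝ (by simp))
  rw [hs₁, direction_affineSpan,
    vectorSpan_eq_span_vsub_set_right ℝ (show a₂ ∈ ({a₂,a₃,a₄}:Set (EuclideanSpace ℝ (Fin 3))) by simp)] at hmem1
  have himg : ((· -ᵥ a₂) '' ({a₂,a₃,a₄}:Set (EuclideanSpace ℝ (Fin 3)))) = {0, a₃-a₂, a₄-a₂} := by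
    simp [Set.image_insert_eq, vsub_eq_sub]
  rw [himg, Submodule.span_insert_zero, Submodule.mem_span_pair] at hmem1
  obtain ⟨α, β, hαβ⟩ := hmem1
  have hmem2 : p₂ -ᵥ a₃ ∈ s₂.direction :=
    AffineSubspace.vsub_mem_direction (orthogonalProjection s₂ a₂).2 (mem_affineSpan ℝ (by simp))
  rw [hs₂, direction_affineSpan, vectorSpan_pair, Submodule.mem_span_singleton] at hmem2
  obtain ⟨t, ht⟩ := hmem2
  -- mirror values
  have hm1 : mirror ({a₂,a₃,a₄} : Set (EuclideanSpace ℝ (Fin 3))) a₁ = reflection s₁ a₁ := by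
    rw [mirror, dif_pos hne1]
  have hm2 : mirror ({a₃,a₄} : Set (EuclideanSpace ℝ (Fin 3))) a₂ = reflection s₂ a₂ := by
    rw [mirror, dif_pos hne2]
  have key₁ : mirror ({a₂,a₃,a₄} : Set (EuclideanSpace ℝ (Fin 3))) a₁ - a₁ =
      (2:ℝ) • (a₂ - a₁) + ((2*α) • (a₃ - a₂) + (2*β) • (a₄ - a₂)) := by
    rw [hm1, EuclideanGeometry.reflection_apply', ← hp1d]
    have hαβ' : p₁ - a₂ = α • (a₃ - a₂) + β • (a₄ - a₂) := by
      simpa [vsub_eq_sub] using hαβ.symm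
    have hp : p₁ = a₂ + (α • (a₃ - a₂) + β • (a₄ - a₂)) := by
      rw [← hαβ']; abel
    rw [vsub_eq_sub, vadd_eq_add, hp]
    module
  have key₂ : mirror ({a₃,a₄} : Set (EuclideanSpace ℝ (Fin 3))) a₂ - a₂ =
      (2:ℝ) • (a₃ - a₂) + (2*t) • (a₃ - a₄) := by
    rw [hm2, EuclideanGeometry.reflection_apply', ← hp2d]
    have ht' : p₂ - a₃ = t • (a₃ - a₄) := by simpa [vsub_eq_sub] using ht.symm
    have hp : p₂ = a₃ + t • (a₃ - a₄) := by rw [← ht']; abel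
    rw [vsub_eq_sub, vadd_eq_add, hp]
    module
  rw [key₁, key₂]
  simp only [Matrix.det_fin_three, Matrix.of_apply, Matrix.cons_val', Matrix.cons_val_zero,
    Matrix.cons_val_one, Matrix.head_cons, Matrix.empty_val', Matrix.cons_val_fin_one,
    Matrix.head_fin_const, Matrix.cons_val_two, Matrix.tail_cons,
    PiLp.add_apply, PiLp.sub_apply, PiLp.smul_apply, smul_eq_mul]
  ring
end

section
/- Let E be a real inner product space, and let a, b, c ∈ E with b ≠ c. Then the reflection of a across the affine span of {b, c} is given by the explicit formula reflection (affineSpan ℝ {b, c}) a = 2 • b − (2⟪c − b, b − a⟫/‖c − b‖²) • (c − b) − a. -/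
open EuclideanGeometry
open scoped InnerProductSpace

/-- Explicit formula for the reflection of a point `a` across the affine span of two distinct
points `b`, `c` in a real inner product space:
`reflection (affineSpan ℝ {b, c}) a = 2 • b − (2⟪c − b, b − a⟫/‖c − b‖²) • (c − b) − a`. -/
theorem reflection_affineSpan_pair_eq
    {E : Type*} [NormedAddCommGroup E] [InnerProductSpace ℝ E]
    (a b c : E) (hbc : b ≠ c) :
    haveI : Nonempty (affineSpan ℝ ({b, c} : Set E)) :=
      ⟨⟨b, mem_affineSpan ℝ (Set.mem_insert b {c})⟩⟩
    haveI : Submodule.HasOrthogonalProjection (affineSpan ℝ ({b, c} : Set E)).direction := by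
      rw [direction_affineSpan, vectorSpan_pair]
      infer_instance
    EuclideanGeometry.reflection (affineSpan ℝ {b, c}) a =
      (2 : ℝ) • b - (2 * ⟪c - b, b - a⟫_ℝ / ‖c - b‖ ^ 2) • (c - b) - a := by
  haveI : Nonempty (affineSpan ℝ ({b, c} : Set E)) :=
    ⟨⟨b, mem_affineSpan ℝ (Set.mem_insert b {c})⟩⟩
  haveI : Submodule.HasOrthogonalProjection (affineSpan ℝ ({b, c} : Set E)).direction := by
    rw [direction_affineSpan, vectorSpan_pair]
    infer_instance
  set s := affineSpan ℝ ({b, c} : Set E)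
  have hcb : c - b ≠ 0 := sub_ne_zero.2 (Ne.symm hbc)
  have hn : ‖c - b‖ ^ 2 ≠ 0 := pow_ne_zero 2 (norm_ne_zero_iff.2 hcb)
  set t : ℝ := ⟪c - b, a - b⟫_ℝ / ‖c - b‖ ^ 2 with ht
  set p : E := t • (c - b) + b with hp
  have hps : p ∈ s := by
    rw [hp]
    exact AffineSubspace.smul_vsub_vadd_mem s t
      (mem_affineSpan ℝ (Set.mem_insert_of_mem _ rfl))
      (mem_affineSpan ℝ (Set.mem_insert b {c}))
      (mem_affineSpan ℝ (Set.mem_insert b {c}))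
  have hdir : s.direction = ℝ ∙ (c - b) := by
    rw [direction_affineSpan, vectorSpan_pair_rev]; rfl
  have hv : a - p ∈ s.directionᗮ := by
    rw [hdir, Submodule.mem_orthogonal_singleton_iff_inner_right]
    rw [hp]
    have : a - (t • (c - b) + b) = (a - b) - t • (c - b) := by abel
    rw [this, inner_sub_right, inner_smul_right, real_inner_self_eq_norm_sq, ht]
    field_simp
    ring
  have hproj : (orthogonalProjection s a : E) = p := by
    have : a = (a - p) +ᵥ p := by simp
    rw [this, orthogonalProjection_vadd_eq_self hps hv]
  rw [EuclideanGeometry.reflection_apply', hproj]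
  rw [hp, ht]
  have h2 : ⟪c - b, b - a⟫_ℝ = -⟪c - b, a - b⟫_ℝ := by
    rw [← inner_neg_right]; rw [neg_sub]
  rw [h2]
  simp only [vsub_eq_sub, vadd_eq_add]
  rw [div_eq_mul_inv, div_eq_mul_inv]
  module
end

section
/- Let k ≥ 1, let Q be the standard quadratic form Q(v) = Σᵢ (v i)² on EuclideanSpace ℝ (Fin k), and let ι : EuclideanSpace ℝ (Fin k) → CliffordAlgebra Q be the canonical embedding. For vectors u₁, …, u_k ∈ EuclideanSpace ℝ (Fin k), let M be the k×k matrix with entries M i j = uᵢ j. Then Σ_{σ ∈ Perm(Fin k)} (sign σ) • (ι(u_{σ(1)}) * ι(u_{σ(2)}) * ⋯ * ι(u_{σ(k)})) = (k! · det M) • (ι(e₁) * ι(e₂) * ⋯ * ι(e_k)), where e₁, …, e_k is the standard orthonormal basis; equivalently, the k-blade u₁ ∧ ⋯ ∧ u_k (the antisymmetrized geometric product) equals det M times the pseudo-scalar I_k = e₁⋯e_k. -/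
open CliffordAlgebra
private lemma fin_swap_succ {n : ℕ} (x y i : Fin n) :
    Equiv.swap x.succ y.succ i.succ = (Equiv.swap x y i).succ := by
  rcases eq_or_ne i x with rfl | hx
  · simp
  rcases eq_or_ne i y with rfl | hy
  · simp
  rw [Equiv.swap_apply_of_ne_of_ne (fun h => hx (Fin.succ_injective _ h))
      (fun h => hy (Fin.succ_injective _ h)), Equiv.swap_apply_of_ne_of_ne hx hy]

private lemma swap_prod {A : Type*} [Ring A] :
    ∀ (k : ℕ) (v : Fin k → A), (∀ i j, i ≠ j → v i * v j = -(v j * v i)) →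
      ∀ x y : Fin k, x ≠ y →
      (List.ofFn (v ∘ Equiv.swap x y)).prod = -(List.ofFn v).prod := by
  intro k
  induction k with
  | zero => exact fun v _ x => x.elim0
  | succ k IH =>
    intro v hv x y hxy
    rcases k with _ | m
    · exact absurd (Fin.ext (by omega)) hxy
    -- case A : both indices are successors
    have caseA : ∀ (w : Fin (m + 2) → A), (∀ i j, i ≠ j → w i * w j = -(w j * w i)) →
        ∀ x' y' : Fin (m + 1), x' ≠ y' →
        (List.ofFn (w ∘ Equiv.swap x'.succ y'.succ)).prod = -(List.ofFn w).prod := by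
      intro w hw x' y' hxy'
      have h0 : (w ∘ Equiv.swap x'.succ y'.succ) 0 = w 0 := by
        simp only [Function.comp_apply]
        rw [Equiv.swap_apply_of_ne_of_ne (Fin.succ_ne_zero _).symm (Fin.succ_ne_zero _).symm]
      have htail : (fun i : Fin (m + 1) => (w ∘ Equiv.swap x'.succ y'.succ) i.succ) =
          ((fun i => w i.succ) ∘ Equiv.swap x' y') := by
        funext i
        simp only [Function.comp_apply, fin_swap_succ]
      rw [List.ofFn_succ, htail, h0, List.prod_cons,
        IH (fun i => w i.succ) (fun i j hij => hw _ _ (fun h => hij (Fin.succ_injective _ h)))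
          x' y' hxy',
        List.ofFn_succ (f := w), List.prod_cons, mul_neg]
    -- base : swap 0 1
    have base : ∀ (w : Fin (m + 2) → A), (∀ i j, i ≠ j → w i * w j = -(w j * w i)) →
        (List.ofFn (w ∘ Equiv.swap 0 1)).prod = -(List.ofFn w).prod := by
      intro w hw
      have h01 : ((1 : Fin (m + 2)) ≠ 0) := by simp
      have hw' : w ∘ Equiv.swap 0 1 = Fin.cons (w 1) (Fin.cons (w 0) fun i => w i.succ.succ) := by
        funext i
        refine Fin.cases ?_ (fun i => ?_) i
        · simp
        refine Fin.cases ?_ (fun i => ?_) i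
        · simp [Fin.succ_zero_eq_one]
        · simp only [Function.comp_apply, Fin.cons_succ]
          rw [Equiv.swap_apply_of_ne_of_ne (Fin.succ_ne_zero _)
            (by rw [← Fin.succ_zero_eq_one];
                exact fun h => Fin.succ_ne_zero _ (Fin.succ_injective _ h))]
      have hw'' : w = Fin.cons (w 0) (Fin.cons (w 1) fun i => w i.succ.succ) := by
        funext i
        refine Fin.cases ?_ (fun i => ?_) i
        · simp
        refine Fin.cases ?_ (fun i => ?_) i
        · simp [Fin.succ_zero_eq_one]
        · simp
      have key := hw 1 0 h01
      rw [← Fin.succ_zero_eq_one] at key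
      rw [hw', hw'']
      simp only [List.ofFn_succ, ← Fin.succ_zero_eq_one, Fin.cons_zero, Fin.cons_succ,
        List.prod_cons]
      rw [← mul_assoc, ← mul_assoc, key, neg_mul]
    -- swap 0 y
    have hzero : ∀ (w : Fin (m + 2) → A), (∀ i j, i ≠ j → w i * w j = -(w j * w i)) →
        ∀ y : Fin (m + 2), y ≠ 0 →
        (List.ofFn (w ∘ Equiv.swap 0 y)).prod = -(List.ofFn w).prod := by
      intro w hw y hy
      obtain ⟨j, rfl⟩ := Fin.eq_succ_of_ne_zero hy
      rcases eq_or_ne j 0 with rfl | hj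
      · rw [Fin.succ_zero_eq_one]; exact base w hw
      obtain ⟨j', rfl⟩ := Fin.eq_succ_of_ne_zero hj
      have swap1y : ∀ (W : Fin (m + 2) → A), (∀ i j, i ≠ j → W i * W j = -(W j * W i)) →
          (List.ofFn (W ∘ Equiv.swap 1 j'.succ.succ)).prod = -(List.ofFn W).prod := by
        intro W hW
        have h1 : Equiv.swap (1 : Fin (m + 2)) j'.succ.succ
            = Equiv.swap (0 : Fin (m + 1)).succ j'.succ.succ := by
          rw [Fin.succ_zero_eq_one]
        rw [h1]
        exact caseA W hW 0 j'.succ (Ne.symm (Fin.succ_ne_zero _))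
      have hf0 : Equiv.swap (1 : Fin (m + 2)) j'.succ.succ 0 = 0 := by
        rw [Equiv.swap_apply_of_ne_of_ne (by simp) (Ne.symm (Fin.succ_ne_zero _))]
      have hf1 : Equiv.swap (1 : Fin (m + 2)) j'.succ.succ 1 = j'.succ.succ :=
        Equiv.swap_apply_left _ _
      have hperm : Equiv.swap (0 : Fin (m + 2)) j'.succ.succ =
          Equiv.swap 1 j'.succ.succ * Equiv.swap 0 1 * Equiv.swap 1 j'.succ.succ := by
        have h := Equiv.swap_apply_apply (Equiv.swap (1 : Fin (m + 2)) j'.succ.succ) 0 1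
        rw [hf0, hf1, Equiv.swap_inv] at h
        exact h
      have hcomp : w ∘ Equiv.swap 0 j'.succ.succ =
          ((w ∘ Equiv.swap 1 j'.succ.succ) ∘ Equiv.swap 0 1) ∘ Equiv.swap 1 j'.succ.succ := by
        funext i
        rw [hperm]
        simp [Equiv.Perm.mul_apply]
      have hwf : ∀ i j, i ≠ j → (w ∘ Equiv.swap 1 j'.succ.succ) i * (w ∘ Equiv.swap 1 j'.succ.succ) j
          = -((w ∘ Equiv.swap 1 j'.succ.succ) j * (w ∘ Equiv.swap 1 j'.succ.succ) i) :=
        fun i j hij => hw _ _ (fun h => hij ((Equiv.swap _ _).injective h))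
      have hwf2 : ∀ i j, i ≠ j →
          ((w ∘ Equiv.swap 1 j'.succ.succ) ∘ Equiv.swap 0 1) i *
            ((w ∘ Equiv.swap 1 j'.succ.succ) ∘ Equiv.swap 0 1) j
          = -(((w ∘ Equiv.swap 1 j'.succ.succ) ∘ Equiv.swap 0 1) j *
            ((w ∘ Equiv.swap 1 j'.succ.succ) ∘ Equiv.swap 0 1) i) :=
        fun i j hij => hwf _ _ (fun h => hij ((Equiv.swap _ _).injective h))
      rw [hcomp, swap1y _ hwf2, base _ hwf, swap1y w hw, neg_neg]
    -- now the three cases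
    rcases eq_or_ne x 0 with rfl | hx
    · exact hzero v hv y (Ne.symm hxy)
    rcases eq_or_ne y 0 with rfl | hy
    · rw [Equiv.swap_comm]; exact hzero v hv x hxy
    obtain ⟨x', rfl⟩ := Fin.eq_succ_of_ne_zero hx
    obtain ⟨y', rfl⟩ := Fin.eq_succ_of_ne_zero hy
    exact caseA v hv x' y' (fun h => hxy (by rw [h]))

private lemma perm_prod {A : Type*} [Ring A] {k : ℕ} (σ : Equiv.Perm (Fin k)) :
    ∀ (v : Fin k → A), (∀ i j, i ≠ j → v i * v j = -(v j * v i)) →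
      (List.ofFn (v ∘ σ)).prod = ((Equiv.Perm.sign σ : ℤ)) • (List.ofFn v).prod := by
  refine Equiv.Perm.swap_induction_on σ (fun v _ => by simp [Function.comp_def]) ?_
  intro f x y hxy IH v hv
  have hcomp : v ∘ (Equiv.swap x y * f) = (v ∘ Equiv.swap x y) ∘ f := by
    funext i; simp [Equiv.Perm.mul_apply]
  rw [hcomp, IH (v ∘ Equiv.swap x y) (fun i j hij => hv _ _
      (fun h => hij ((Equiv.swap x y).injective h))),
    swap_prod _ v hv x y hxy, Equiv.Perm.sign_mul, Equiv.Perm.sign_swap hxy]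
  simp [smul_smul]

/-- The standard quadratic form `Q v = Σ i, (v i)² = ⟪v, v⟫` on `EuclideanSpace ℝ (Fin k)`. -/
noncomputable def Qstd (k : ℕ) : QuadraticForm ℝ (EuclideanSpace ℝ (Fin k)) :=
  LinearMap.BilinMap.toQuadraticMap (innerₗ (EuclideanSpace ℝ (Fin k)))

/-- In the Clifford algebra of the standard quadratic form on `EuclideanSpace ℝ (Fin k)`
(`k ≥ 1`), the antisymmetrized geometric product of vectors `u₁, …, u_k` equals
`k! · det M` times the pseudo-scalar `I_k = e₁ ⋯ e_k`, where `M i j = uᵢ j` and the `eᵢ`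
are the standard basis vectors. -/
theorem antisymmetrized_product_eq_det_smul_pseudoscalar
    (k : ℕ) (hk : 1 ≤ k) (u : Fin k → EuclideanSpace ℝ (Fin k)) :
    ∑ σ : Equiv.Perm (Fin k),
        (((Equiv.Perm.sign σ : ℤ) : ℝ) •
          (List.ofFn fun i : Fin k => ι (Qstd k) (u (σ i))).prod) =
      ((k.factorial : ℝ) * (Matrix.of fun i j => u i j).det) •
        (List.ofFn fun i : Fin k => ι (Qstd k) (EuclideanSpace.single i (1 : ℝ))).prod := by
  classical
  set b : Module.Basis (Fin k) ℝ (EuclideanSpace ℝ (Fin k)) := PiLp.basisFun 2 ℝ (Fin k) with hbdef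
  have hb : ∀ i, b i = EuclideanSpace.single i (1 : ℝ) := fun i => by
    rw [hbdef, PiLp.basisFun_apply]
  -- the basis images anticommute
  have horth : ∀ i j : Fin k, i ≠ j →
      ι (Qstd k) (b i) * ι (Qstd k) (b j) = -(ι (Qstd k) (b j) * ι (Qstd k) (b i)) := by
    intro i j hij
    refine ι_mul_ι_comm_of_isOrtho ?_
    have hinner : (inner ℝ (b i) (b j) : ℝ) = 0 := by
      rw [hb, hb, EuclideanSpace.inner_single_left, EuclideanSpace.single_apply]
      simp [hij]
    show (Qstd k) (b i + b j) = (Qstd k) (b i) + (Qstd k) (b j)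
    simp only [Qstd, LinearMap.BilinMap.toQuadraticMap_apply, innerₗ_apply_apply]
    rw [real_inner_add_add_self, hinner]
    ring
  -- the multilinear product map and its alternatization
  set F : MultilinearMap ℝ (fun _ : Fin k => EuclideanSpace ℝ (Fin k))
      (CliffordAlgebra (Qstd k)) :=
    (MultilinearMap.mkPiAlgebraFin ℝ k (CliffordAlgebra (Qstd k))).compLinearMap
      fun _ => ι (Qstd k) with hFdef
  have hF : ∀ v, F v = (List.ofFn fun i => ι (Qstd k) (v i)).prod := fun v => by
    rw [hFdef, MultilinearMap.compLinearMap_apply, MultilinearMap.mkPiAlgebraFin_apply]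
  set G := MultilinearMap.alternatization F with hGdef
  have hG : ∀ v : Fin k → EuclideanSpace ℝ (Fin k),
      G v = ∑ σ : Equiv.Perm (Fin k),
        ((Equiv.Perm.sign σ : ℤ)) • (List.ofFn fun i => ι (Qstd k) (v (σ i))).prod := by
    intro v
    rw [hGdef, MultilinearMap.alternatization_apply]
    refine Finset.sum_congr rfl fun σ _ => ?_
    rw [MultilinearMap.domDomCongr_apply, hF, Units.smul_def]
  -- `G` equals `det` times its value on the basis
  have keymap : G = (LinearMap.toSpanSingleton ℝ (CliffordAlgebra (Qstd k))
      (G ⇑b)).compAlternatingMap b.det := by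
    refine Module.Basis.ext_alternating b fun w hw => ?_
    let σ : Equiv.Perm (Fin k) := Equiv.ofBijective w (Finite.injective_iff_bijective.1 hw)
    have hwσ : (fun i => b (w i)) = ⇑b ∘ ⇑σ := rfl
    rw [hwσ, AlternatingMap.map_perm, LinearMap.compAlternatingMap_apply,
      AlternatingMap.map_perm, Module.Basis.det_self, LinearMap.toSpanSingleton_apply]
    rcases Int.units_eq_one_or (Equiv.Perm.sign σ) with h | h <;> simp [h]
  have key : G u = b.det u • G ⇑b := by
    have := DFunLike.congr_fun keymap u
    rwa [LinearMap.compAlternatingMap_apply, LinearMap.toSpanSingleton_apply] at this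
  -- value of `G` on the basis
  have hGb : G ⇑b = k.factorial • F ⇑b := by
    rw [hG]
    have hterm : ∀ σ : Equiv.Perm (Fin k),
        ((Equiv.Perm.sign σ : ℤ)) • (List.ofFn fun i => ι (Qstd k) (b (σ i))).prod
          = F ⇑b := by
      intro σ
      have hcomp : (fun i => ι (Qstd k) (b (σ i)))
          = (fun i => ι (Qstd k) (b i)) ∘ ⇑σ := rfl
      rw [hcomp, perm_prod σ _ horth, smul_smul, hF]
      rcases Int.units_eq_one_or (Equiv.Perm.sign σ) with h | h <;> simp [h]
    rw [Finset.sum_congr rfl fun σ _ => hterm σ, Finset.sum_const, Finset.card_univ,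
      Fintype.card_perm, Fintype.card_fin]
  -- determinant computation
  have hdet : b.det u = (Matrix.of fun i j => u i j).det := by
    rw [Module.Basis.det_apply]
    have : b.toMatrix u = (Matrix.of fun i j => u i j).transpose := by
      ext i j
      rw [Module.Basis.toMatrix_apply, hbdef, PiLp.basisFun_repr]
      rfl
    rw [this, Matrix.det_transpose]
  -- assemble
  have hLHS : (∑ σ : Equiv.Perm (Fin k),
      (((Equiv.Perm.sign σ : ℤ) : ℝ) •
        (List.ofFn fun i : Fin k => ι (Qstd k) (u (σ i))).prod)) = G u := by
    rw [hG]
    exact Finset.sum_congr rfl fun σ _ => (Int.cast_smul_eq_zsmul ℝ _ _)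
  have hFb : F ⇑b = (List.ofFn fun i : Fin k =>
      ι (Qstd k) (EuclideanSpace.single i (1 : ℝ))).prod := by
    rw [hF]
    congr 1
    exact congrArg List.ofFn (funext fun i => by rw [hb])
  rw [hLHS, key, hGb, hdet, hFb, ← Nat.cast_smul_eq_nsmul ℝ, smul_smul, mul_comm]
end

section
/- Let n ≥ 2, let E be a real inner product space of dimension n, let f : E → ℝ be any function and g ∈ E any vector, and let a₁, …, a_{n+1} ∈ E be affinely independent. For 1 ≤ i ≤ n−1 let āᵢ be the reflection of aᵢ across the affine span of a_{i+1}, …, a_{n+1}, and set r̄ = Σ_{i=1}^{n−1} ((f(āᵢ) − f(aᵢ))/‖āᵢ − aᵢ‖²) • (āᵢ − aᵢ) + ((f(a_{n+1}) − f(aₙ))/‖a_{n+1} − aₙ‖²) • (a_{n+1} − aₙ). Then ‖r̄ − g‖ ≤ Σ_{i=1}^{n−1} |f(āᵢ) − f(aᵢ) − ⟪g, āᵢ − aᵢ⟫| / ‖āᵢ − aᵢ‖ + |f(a_{n+1}) − f(aₙ) − ⟪g, a_{n+1} − aₙ⟫| / ‖a_{n+1} − aₙ‖. -/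
open EuclideanGeometry
open scoped InnerProductSpace

/-- For any `f : E → ℝ`, any vector `g`, and affinely independent points `a 0, …, a n`
(`n ≥ 2`, `dim E = n`), the mean multi-difference quotient vector `r̄` satisfies
`‖r̄ − g‖ ≤ Σᵢ |f āᵢ − f aᵢ − ⟪g, āᵢ − aᵢ⟫| / ‖āᵢ − aᵢ‖
  + |f a_{n+1} − f aₙ − ⟪g, a_{n+1} − aₙ⟫| / ‖a_{n+1} − aₙ‖` (0-based indexing). -/
theorem mean_ratio_sub_vector_norm_le
    {E : Type*} [NormedAddCommGroup E] [InnerProductSpace ℝ E] [FiniteDimensional ℝ E]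
    (n : ℕ) (hn : 2 ≤ n) (hdim : Module.finrank ℝ E = n)
    (f : E → ℝ) (g : E) (a : Fin (n + 1) → E) (ha : AffineIndependent ℝ a) :
    let v : Fin (n - 1) → E := fun i => mirrored n a i - a (Fin.castLE (by omega) i)
    let w : E := a (Fin.last n) - a ⟨n - 1, by omega⟩
    let rbar : E := (∑ i : Fin (n - 1),
        ((f (mirrored n a i) - f (a (Fin.castLE (by omega) i))) / ‖v i‖ ^ 2) • v i) +
      ((f (a (Fin.last n)) - f (a ⟨n - 1, by omega⟩)) / ‖w‖ ^ 2) • w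
    ‖rbar - g‖ ≤
      (∑ i : Fin (n - 1),
        |f (mirrored n a i) - f (a (Fin.castLE (by omega) i)) - ⟪g, v i⟫_ℝ| / ‖v i‖) +
      |f (a (Fin.last n)) - f (a ⟨n - 1, by omega⟩) - ⟪g, w⟫_ℝ| / ‖w‖ := by
  obtain ⟨m, rfl⟩ : ∃ m, n = m + 2 := ⟨n - 2, by omega⟩
  intro v w rbar
  set ci : Fin (m + 1) → Fin (m + 3) := fun i => Fin.castLE (by omega) i with hci
  set S : Fin (m + 1) → Set E := fun i => a '' {j | ci i < j} with hSdef
  have hSne : ∀ i : Fin (m + 1), (S i).Nonempty := fun i =>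
    ⟨a (Fin.last (m + 2)), ⟨Fin.last (m + 2), by
      simp only [Set.mem_setOf_eq, Fin.lt_def, hci, Fin.coe_castLE, Fin.val_last]
      omega, rfl⟩⟩
  have hmirr : ∀ i : Fin (m + 1),
      haveI : Nonempty (affineSpan ℝ (S i)) := ((affineSpan_nonempty ℝ).mpr (hSne i)).to_subtype
      mirrored (m + 2) a i = reflection (affineSpan ℝ (S i)) (a (ci i)) := by
    intro i
    rw [show mirrored (m + 2) a i = mirror (S i) (a (ci i)) from rfl, mirror, dif_pos (hSne i)]
  -- v i is orthogonal to the direction of affineSpan (S i)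
  have hvperp : ∀ i : Fin (m + 1), v i ∈ (affineSpan ℝ (S i)).directionᗮ := by
    intro i
    haveI : Nonempty (affineSpan ℝ (S i)) := ((affineSpan_nonempty ℝ).mpr (hSne i)).to_subtype
    have hproj := vsub_orthogonalProjection_mem_direction_orthogonal (affineSpan ℝ (S i)) (a (ci i))
    have h2 : (orthogonalProjection (affineSpan ℝ (S i)) (a (ci i)) : E) -ᵥ a (ci i) ∈
        (affineSpan ℝ (S i)).directionᗮ := by
      have := Submodule.neg_mem _ hproj
      rwa [neg_vsub_eq_vsub_rev] at this
    have hv : v i = ((orthogonalProjection (affineSpan ℝ (S i)) (a (ci i)) : E) -ᵥ a (ci i)) +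
        ((orthogonalProjection (affineSpan ℝ (S i)) (a (ci i)) : E) -ᵥ a (ci i)) := by
      show mirrored (m + 2) a i - a (ci i) = _
      rw [hmirr i, EuclideanGeometry.reflection_apply']
      simp only [vsub_eq_sub, vadd_eq_add]
      abel
    rw [hv]
    exact Submodule.add_mem _ h2 h2
  -- membership facts
  have hmem : ∀ i j : Fin (m + 1), i < j →
      mirrored (m + 2) a j ∈ affineSpan ℝ (S i) ∧ a (ci j) ∈ affineSpan ℝ (S i) := by
    intro i j hij
    have haj : a (ci j) ∈ S i := ⟨ci j, by
      simp only [Set.mem_setOf_eq, Fin.lt_def, hci, Fin.coe_castLE]; exact hij, rfl⟩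
    have haj' : a (ci j) ∈ affineSpan ℝ (S i) := mem_affineSpan ℝ haj
    refine ⟨?_, haj'⟩
    haveI : Nonempty (affineSpan ℝ (S j)) := ((affineSpan_nonempty ℝ).mpr (hSne j)).to_subtype
    have hle : affineSpan ℝ (S j) ≤ affineSpan ℝ (S i) := affineSpan_mono ℝ (by
      rintro x ⟨k, hk, rfl⟩
      refine ⟨k, ?_, rfl⟩
      simp only [Set.mem_setOf_eq, Fin.lt_def, hci, Fin.coe_castLE] at hk ⊢
      omega)
    have hp : (orthogonalProjection (affineSpan ℝ (S j)) (a (ci j)) : E) ∈ affineSpan ℝ (S i) :=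
      hle (orthogonalProjection (affineSpan ℝ (S j)) (a (ci j))).2
    rw [hmirr j, EuclideanGeometry.reflection_apply']
    exact AffineSubspace.vadd_mem_of_mem_direction
      (AffineSubspace.vsub_mem_direction hp haj') hp
  -- pairwise orthogonality of v
  have hvv : ∀ i j : Fin (m + 1), i < j → ⟪v i, v j⟫_ℝ = 0 := by
    intro i j hij
    obtain ⟨h1, h2⟩ := hmem i j hij
    have hd : v j ∈ (affineSpan ℝ (S i)).direction := by
      have := AffineSubspace.vsub_mem_direction h1 h2
      rwa [vsub_eq_sub] at this
    exact (Submodule.mem_orthogonal' _ _).mp (hvperp i) _ hd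
  -- orthogonality of v and w
  have hvw : ∀ i : Fin (m + 1), ⟪v i, w⟫_ℝ = 0 := by
    intro i
    have h1 : a (Fin.last (m + 2)) ∈ affineSpan ℝ (S i) := mem_affineSpan ℝ ⟨Fin.last (m + 2), by
      simp only [Set.mem_setOf_eq, Fin.lt_def, hci, Fin.coe_castLE, Fin.val_last]; omega, rfl⟩
    have h2 : a ⟨m + 2 - 1, by omega⟩ ∈ affineSpan ℝ (S i) :=
      mem_affineSpan ℝ ⟨⟨m + 2 - 1, by omega⟩, by
        simp only [Set.mem_setOf_eq, Fin.lt_def, hci, Fin.coe_castLE]; omega, rfl⟩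
    have hd : w ∈ (affineSpan ℝ (S i)).direction := by
      have := AffineSubspace.vsub_mem_direction h1 h2
      rwa [vsub_eq_sub] at this
    exact (Submodule.mem_orthogonal' _ _).mp (hvperp i) _ hd
  -- nonvanishing
  have hv0 : ∀ i : Fin (m + 1), v i ≠ 0 := by
    intro i h
    have heq : mirrored (m + 2) a i = a (ci i) := by
      have h' : mirrored (m + 2) a i - a (ci i) = 0 := h
      exact sub_eq_zero.mp h'
    haveI : Nonempty (affineSpan ℝ (S i)) := ((affineSpan_nonempty ℝ).mpr (hSne i)).to_subtype
    rw [hmirr i, EuclideanGeometry.reflection_eq_self_iff] at heq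
    have hsub : S i ⊆ a '' (Set.univ \ {ci i}) := by
      rintro x ⟨k, hk, rfl⟩
      refine ⟨k, ⟨trivial, ?_⟩, rfl⟩
      simp only [Set.mem_setOf_eq] at hk
      intro hc
      simp only [Set.mem_singleton_iff] at hc
      subst hc
      exact lt_irrefl _ hk
    exact ha.notMem_affineSpan_diff (ci i) Set.univ ((affineSpan_mono ℝ hsub) heq)
  have hw0 : w ≠ 0 := by
    refine sub_ne_zero.mpr (ha.injective.ne ?_)
    simp only [ne_eq, Fin.ext_iff, Fin.val_last]
    omega
  have hvn : ∀ i : Fin (m + 1), ‖v i‖ ≠ 0 := fun i => norm_ne_zero_iff.mpr (hv0 i)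
  have hwn : ‖w‖ ≠ 0 := norm_ne_zero_iff.mpr hw0
  -- the orthonormal family
  set b : Fin (m + 2) → E := Fin.snoc (fun i => ‖v i‖⁻¹ • v i) (‖w‖⁻¹ • w) with hb
  have hbv : ∀ i : Fin (m + 1), b (Fin.castSucc i) = ‖v i‖⁻¹ • v i := fun i => by
    simp [hb]
  have hbw : b (Fin.last (m + 1)) = ‖w‖⁻¹ • w := by simp [hb]
  have hbnorm : ∀ k, ‖b k‖ = 1 := by
    intro k
    induction k using Fin.lastCases with
    | last => rw [hbw, norm_smul]; simp [inv_mul_cancel₀ hwn]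
    | cast i => rw [hbv i, norm_smul]; simp [inv_mul_cancel₀ (hvn i)]
  have hON : Orthonormal ℝ b := by
    refine ⟨fun k => hbnorm k, @fun k l hkl => ?_⟩
    induction k using Fin.lastCases with
    | last =>
      induction l using Fin.lastCases with
      | last => exact absurd rfl hkl
      | cast j =>
        rw [hbw, hbv j, real_inner_smul_left, real_inner_smul_right,
          real_inner_comm, hvw j]
        ring
    | cast i =>
      induction l using Fin.lastCases with
      | last =>
        rw [hbw, hbv i, real_inner_smul_left, real_inner_smul_right, hvw i]
        ring
      | cast j =>
        have hij : i ≠ j := fun h => hkl (congrArg _ h)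
        rw [hbv i, hbv j, real_inner_smul_left, real_inner_smul_right]
        rcases lt_or_gt_of_ne hij with h | h
        · rw [hvv i j h]; ring
        · rw [real_inner_comm, hvv j i h]; ring
  have hcard : Fintype.card (Fin (m + 2)) = Module.finrank ℝ E := by
    simp [hdim]
  let onb : OrthonormalBasis (Fin (m + 2)) ℝ E :=
    OrthonormalBasis.mk hON (hON.linearIndependent.span_eq_top_of_card_eq_finrank hcard).ge
  have hg : ∑ k, ⟪b k, g⟫_ℝ • b k = g := by
    have h := onb.sum_repr' g
    simpa only [onb, OrthonormalBasis.coe_mk] using h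
  -- the coefficient function
  set c : Fin (m + 2) → ℝ := Fin.snoc
    (fun i => (f (mirrored (m + 2) a i) - f (a (ci i))) / ‖v i‖)
    ((f (a (Fin.last (m + 2))) - f (a ⟨m + 2 - 1, by omega⟩)) / ‖w‖) with hc
  have hcv : ∀ i : Fin (m + 1),
      c (Fin.castSucc i) = (f (mirrored (m + 2) a i) - f (a (ci i))) / ‖v i‖ := fun i => by
    simp [hc]
  have hcw : c (Fin.last (m + 1)) =
      (f (a (Fin.last (m + 2))) - f (a ⟨m + 2 - 1, by omega⟩)) / ‖w‖ := by simp [hc]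
  have hrbar : rbar = ∑ k, c k • b k := by
    show (∑ i : Fin (m + 1),
        ((f (mirrored (m + 2) a i) - f (a (ci i))) / ‖v i‖ ^ 2) • v i) +
      ((f (a (Fin.last (m + 2))) - f (a ⟨m + 2 - 1, by omega⟩)) / ‖w‖ ^ 2) • w = _
    conv_rhs => rw [Fin.sum_univ_castSucc]
    congr 1
    · refine Finset.sum_congr rfl fun i _ => ?_
      rw [hcv i, hbv i, smul_smul]
      congr 1
      rw [pow_two, div_mul_eq_div_div, div_eq_mul_inv]
    · rw [hcw, hbw, smul_smul]
      congr 1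
      rw [pow_two, div_mul_eq_div_div, div_eq_mul_inv]
  have key : rbar - g = ∑ k, (c k - ⟪b k, g⟫_ℝ) • b k := by
    rw [hrbar]
    conv_lhs => rw [← hg]
    rw [← Finset.sum_sub_distrib]
    exact Finset.sum_congr rfl fun k _ => (sub_smul _ _ _).symm
  calc ‖rbar - g‖ = ‖∑ k, (c k - ⟪b k, g⟫_ℝ) • b k‖ := by rw [key]
    _ ≤ ∑ k, ‖(c k - ⟪b k, g⟫_ℝ) • b k‖ := norm_sum_le _ _
    _ = ∑ k, |c k - ⟪b k, g⟫_ℝ| := by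
        refine Finset.sum_congr rfl fun k _ => ?_
        rw [norm_smul, hbnorm k, mul_one, Real.norm_eq_abs]
    _ = _ := by
        rw [Fin.sum_univ_castSucc]
        congr 1
        · refine Finset.sum_congr rfl fun i _ => ?_
          rw [hcv i, hbv i, real_inner_smul_left, real_inner_comm,
            show (f (mirrored (m + 2) a i) - f (a (ci i))) / ‖v i‖ -
              ‖v i‖⁻¹ * ⟪g, v i⟫_ℝ =
              (f (mirrored (m + 2) a i) - f (a (ci i)) - ⟪g, v i⟫_ℝ) / ‖v i‖ by
                rw [inv_mul_eq_div, div_sub_div_same], abs_div, abs_norm]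
        · rw [hcw, hbw, real_inner_smul_left, real_inner_comm,
            show (f (a (Fin.last (m + 2))) - f (a ⟨m + 2 - 1, by omega⟩)) / ‖w‖ -
              ‖w‖⁻¹ * ⟪g, w⟫_ℝ =
              (f (a (Fin.last (m + 2))) - f (a ⟨m + 2 - 1, by omega⟩) - ⟪g, w⟫_ℝ) / ‖w‖ by
                rw [inv_mul_eq_div, div_sub_div_same], abs_div, abs_norm]
end
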